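/- arXiv:0709.3411 — 2 statements merged into one kernel-verified Lean document; each statement's English description precedes it below -/
import Mathlib

section
/- Let L ⊆ ℝ^Ω be a linear subspace. A linear functional φ on L admits a representing measure (i.e., m ∈ ba with L ⊆ L(m) and φ(f) = φ(1)m(f), or more generally φ(f) = λ(f) for some λ ∈ ba) if and only if there exists μ ∈ ba with L ⊆ L(μ) such that φ is continuous with respect to the L(μ)-seminorm ‖f‖ = μ(|f|). Moreover, if φ is positive and L is a vector sublattice, the representing measure may be chosen positive. -/
open Filter Set

/-- A positive finitely additive set function on `2^Ω`. -/
structure FinAddMeasure (Ω : Type*) where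
  μ : Set Ω → ℝ
  nonneg : ∀ E, 0 ≤ μ E
  empty : μ ∅ = 0
  add : ∀ E F : Set Ω, Disjoint E F → μ (E ∪ F) = μ E + μ F

/-- A finitely additive probability on `2^Ω`. -/
structure FinAddProb (Ω : Type*) extends FinAddMeasure Ω where
  total : μ Set.univ = 1

/-- Lower (simple-function) sums for `f` relative to a set function `μ` defined
on the sets of the family `A`: sums `∑ aᵢ μ(Eᵢ)` with `aᵢ ≥ 0`, `Eᵢ ∈ A` and
`∑ aᵢ 1_{Eᵢ} ≤ f` pointwise. -/
def lowerSums {Ω : Type*} (A : Set (Set Ω)) (μ : Set Ω → ℝ) (f : Ω → ℝ) : Set ℝ :=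
  { r | ∃ (n : ℕ) (a : Fin n → ℝ) (E : Fin n → Set Ω),
      (∀ i, 0 ≤ a i) ∧ (∀ i, E i ∈ A) ∧
      (∀ ω, (∑ i, a i * (E i).indicator (fun _ => (1 : ℝ)) ω) ≤ f ω) ∧
      r = ∑ i, a i * μ (E i) }

/-- `f` is integrable with respect to `μ` (restricted to the family `A`):
the lower sums of the positive and of the negative part are bounded above. -/
def FAIntegrableOn {Ω : Type*} (A : Set (Set Ω)) (μ : Set Ω → ℝ) (f : Ω → ℝ) : Prop :=
  BddAbove (lowerSums A μ (fun ω => max (f ω) 0)) ∧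
  BddAbove (lowerSums A μ (fun ω => max (-(f ω)) 0))

/-- The finitely additive integral `μ(f) = μ(f⁺) - μ(f⁻)` obtained from lower sums. -/
noncomputable def faIntOn {Ω : Type*} (A : Set (Set Ω)) (μ : Set Ω → ℝ) (f : Ω → ℝ) : ℝ :=
  sSup (lowerSums A μ (fun ω => max (f ω) 0)) -
    sSup (lowerSums A μ (fun ω => max (-(f ω)) 0))

/-- Integrability with respect to a finitely additive measure on all of `2^Ω`. -/
def FAIntegrable {Ω : Type*} (m : FinAddMeasure Ω) (f : Ω → ℝ) : Prop :=
  FAIntegrableOn Set.univ m.μ f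

/-- The integral with respect to a finitely additive measure on all of `2^Ω`. -/
noncomputable def faInt {Ω : Type*} (m : FinAddMeasure Ω) (f : Ω → ℝ) : ℝ :=
  faIntOn Set.univ m.μ f


namespace Rep17
variable {Ω : Type*}

variable {Ω : Type*}

lemma fam_mono (m : FinAddMeasure Ω) {E F : Set Ω} (h : E ⊆ F) : m.μ E ≤ m.μ F := by
  have hF : F = E ∪ (F \ E) := by rw [Set.union_diff_cancel h]
  have := m.add E (F \ E) disjoint_sdiff_right
  rw [← hF] at this
  have := m.nonneg (F \ E)
  linarith

noncomputable def S (m : FinAddMeasure Ω) (g : Ω → ℝ) : Set ℝ := lowerSums Set.univ m.μ g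
noncomputable def I (m : FinAddMeasure Ω) (g : Ω → ℝ) : ℝ := sSup (S m g)

lemma mem_S {m : FinAddMeasure Ω} {g : Ω → ℝ} {n : ℕ} {a : Fin n → ℝ} {E : Fin n → Set Ω}
    (ha : ∀ i, 0 ≤ a i)
    (hle : ∀ ω, (∑ i, a i * (E i).indicator (fun _ => (1:ℝ)) ω) ≤ g ω) :
    (∑ i, a i * m.μ (E i)) ∈ S m g :=
  ⟨n, a, E, ha, fun _ => trivial, hle, rfl⟩

lemma zero_mem_S {m : FinAddMeasure Ω} {g : Ω → ℝ} (hg : ∀ ω, 0 ≤ g ω) : (0:ℝ) ∈ S m g := by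
  have h := mem_S (m := m) (g := g) (a := (fun _ => 0 : Fin 0 → ℝ)) (E := fun _ => ∅)
    (fun i => le_rfl) (by intro ω; simpa using hg ω)
  simpa using h

lemma S_nonempty {m : FinAddMeasure Ω} {g : Ω → ℝ} (hg : ∀ ω, 0 ≤ g ω) : (S m g).Nonempty :=
  ⟨0, zero_mem_S hg⟩

lemma I_nonneg {m : FinAddMeasure Ω} {g : Ω → ℝ} (hg : ∀ ω, 0 ≤ g ω)
    (hb : BddAbove (S m g)) : 0 ≤ I m g :=
  le_csSup hb (zero_mem_S hg)

/-- finite additivity over a finset of pairwise disjoint sets -/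
lemma finadd (m : FinAddMeasure Ω) {κ : Type*} (s : Finset κ) (D : κ → Set Ω)
    (hd : ∀ k ∈ s, ∀ l ∈ s, k ≠ l → Disjoint (D k) (D l)) :
    m.μ (⋃ k ∈ s, D k) = ∑ k ∈ s, m.μ (D k) := by
  classical
  induction s using Finset.induction_on with
  | empty => simp [m.empty]
  | insert a s' ha ih =>
    rw [Finset.set_biUnion_insert, m.add, Finset.sum_insert ha,
      ih (fun k hk l hl hkl => hd k (Finset.mem_insert_of_mem hk) l (Finset.mem_insert_of_mem hl) hkl)]
    · rw [Set.disjoint_iUnion₂_right]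
      intro k hk
      exact hd a (Finset.mem_insert_self a s') k (Finset.mem_insert_of_mem hk)
        (fun h => ha (h ▸ hk))

/-- THE comparison lemma: if two nonneg combinations of indicators satisfy a
pointwise inequality, their μ-values satisfy the same inequality. -/
lemma comparison (m : FinAddMeasure Ω) {ι : Type*} [Fintype ι] (c d : ι → ℝ)
    (hc : ∀ i, 0 ≤ c i) (hd : ∀ i, 0 ≤ d i) (G : ι → Set Ω)
    (hle : ∀ ω, (∑ i, c i * (G i).indicator (fun _ => (1:ℝ)) ω)
      ≤ ∑ i, d i * (G i).indicator (fun _ => (1:ℝ)) ω) :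
    (∑ i, c i * m.μ (G i)) ≤ ∑ i, d i * m.μ (G i) := by
  classical
  set atom : (ι → Bool) → Set Ω := fun σ => {ω | ∀ i, ω ∈ G i ↔ σ i = true} with hatom
  have hdisj : ∀ σ τ : ι → Bool, σ ≠ τ → Disjoint (atom σ) (atom τ) := by
    intro σ τ hst
    rw [Set.disjoint_left]
    intro ω hσ hτ
    apply hst
    funext i
    have h1 := (hσ i)
    have h2 := (hτ i)
    by_cases h : ω ∈ G i
    · rw [h1.mp h, h2.mp h]
    · cases hσi : σ i <;> cases hτi : τ i <;> simp_all
  have hGi : ∀ i, m.μ (G i) = ∑ σ : ι → Bool, if σ i = true then m.μ (atom σ) else 0 := by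
    intro i
    have hset : G i = ⋃ σ ∈ Finset.univ.filter (fun σ : ι → Bool => σ i = true), atom σ := by
      ext ω
      simp only [Set.mem_iUnion, Finset.mem_filter, Finset.mem_univ, true_and]
      constructor
      · intro hw
        refine ⟨fun k => decide (ω ∈ G k), by simpa using hw, fun k => by simp⟩
      · rintro ⟨σ, hσi, hωσ⟩
        exact (hωσ i).mpr hσi
    rw [hset, finadd m _ _ (fun k hk l hl hkl => hdisj k l hkl), Finset.sum_filter]
  have key : ∀ e : ι → ℝ, (∀ i, 0 ≤ e i) →
      (∑ i, e i * m.μ (G i)) =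
        ∑ σ : ι → Bool, (∑ i, if σ i = true then e i else 0) * m.μ (atom σ) := by
    intro e _
    calc ∑ i, e i * m.μ (G i)
        = ∑ i, ∑ σ : ι → Bool, (if σ i = true then e i * m.μ (atom σ) else 0) := by
          refine Finset.sum_congr rfl fun i _ => ?_
          rw [hGi i, Finset.mul_sum]
          refine Finset.sum_congr rfl fun σ _ => ?_
          split <;> simp
      _ = ∑ σ : ι → Bool, ∑ i, (if σ i = true then e i else 0) * m.μ (atom σ) := by
          rw [Finset.sum_comm]
          refine Finset.sum_congr rfl fun σ _ => Finset.sum_congr rfl fun i _ => ?_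
          split <;> simp
      _ = ∑ σ : ι → Bool, (∑ i, if σ i = true then e i else 0) * m.μ (atom σ) := by
          refine Finset.sum_congr rfl fun σ _ => ?_
          rw [Finset.sum_mul]
  rw [key c hc, key d hd]
  refine Finset.sum_le_sum fun σ _ => ?_
  rcases eq_or_ne (atom σ) ∅ with hσ | hσ
  · simp [hσ, m.empty]
  · obtain ⟨ω, hω⟩ := Set.nonempty_iff_ne_empty.mpr hσ
    have hval : ∀ e : ι → ℝ, (∑ i, if σ i = true then e i else 0)
        = ∑ i, e i * (G i).indicator (fun _ => (1:ℝ)) ω := by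
      intro e
      refine Finset.sum_congr rfl fun i _ => ?_
      by_cases h : ω ∈ G i
      · rw [Set.indicator_of_mem h, if_pos ((hω i).mp h)]; ring
      · rw [Set.indicator_of_notMem h, if_neg (fun ht => h ((hω i).mpr ht))]; ring
    rw [hval c, hval d]
    exact mul_le_mul_of_nonneg_right (hle ω) (m.nonneg _)



lemma mem_S_fintype {m : FinAddMeasure Ω} {g : Ω → ℝ} {ι : Type*} [Fintype ι]
    (c : ι → ℝ) (G : ι → Set Ω) (hc : ∀ i, 0 ≤ c i)
    (hle : ∀ ω, (∑ i, c i * (G i).indicator (fun _ => (1:ℝ)) ω) ≤ g ω) :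
    (∑ i, c i * m.μ (G i)) ∈ S m g := by
  classical
  let e := Fintype.equivFin ι
  refine ⟨Fintype.card ι, fun k => c (e.symm k), fun k => G (e.symm k), fun k => hc _,
    fun _ => trivial, ?_, ?_⟩
  · intro ω
    rw [Equiv.sum_comp e.symm (fun i => c i * (G i).indicator (fun _ => (1:ℝ)) ω)]
    exact hle ω
  · rw [Equiv.sum_comp e.symm (fun i => c i * m.μ (G i))]

/-- every lower sum of `g` is bounded by the value of any simple dominator of `g`. -/
lemma S_le_of_dominated {m : FinAddMeasure Ω} {g : Ω → ℝ} {nb : ℕ}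
    {b : Fin nb → ℝ} {F : Fin nb → Set Ω} (hb : ∀ j, 0 ≤ b j)
    (hgb : ∀ ω, g ω ≤ ∑ j, b j * (F j).indicator (fun _ => (1:ℝ)) ω) :
    ∀ r ∈ S m g, r ≤ ∑ j, b j * m.μ (F j) := by
  rintro r ⟨n, a, E, ha, -, hle, rfl⟩
  have := comparison m (ι := Fin n ⊕ Fin nb) (Sum.elim a 0) (Sum.elim 0 b)
    (by rintro (i | j) <;> simp [ha, hb]) (by rintro (i | j) <;> simp [ha, hb])
    (Sum.elim E F) ?_
  · simpa [Fintype.sum_sum_type] using this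
  · intro ω
    simpa [Fintype.sum_sum_type] using (hle ω).trans (hgb ω)

lemma bddAbove_S_of_dominated {m : FinAddMeasure Ω} {g : Ω → ℝ} {nb : ℕ}
    {b : Fin nb → ℝ} {F : Fin nb → Set Ω} (hb : ∀ j, 0 ≤ b j)
    (hgb : ∀ ω, g ω ≤ ∑ j, b j * (F j).indicator (fun _ => (1:ℝ)) ω) :
    BddAbove (S m g) :=
  ⟨_, fun r hr => S_le_of_dominated hb hgb r hr⟩

lemma S_mono_g {m : FinAddMeasure Ω} {g1 g2 : Ω → ℝ} (h : ∀ ω, g1 ω ≤ g2 ω) :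
    S m g1 ⊆ S m g2 := by
  rintro r ⟨n, a, E, ha, hA, hle, rfl⟩
  exact ⟨n, a, E, ha, hA, fun ω => (hle ω).trans (h ω), rfl⟩

lemma I_mono_g {m : FinAddMeasure Ω} {g1 g2 : Ω → ℝ} (h : ∀ ω, g1 ω ≤ g2 ω)
    (h1 : ∀ ω, 0 ≤ g1 ω) (hb : BddAbove (S m g2)) : I m g1 ≤ I m g2 :=
  csSup_le_csSup hb (S_nonempty h1) (S_mono_g h)

/-- value of a simple function: `I` of a simple function is its value. -/
lemma I_simple {m : FinAddMeasure Ω} {nb : ℕ} {b : Fin nb → ℝ} {F : Fin nb → Set Ω}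
    (hb : ∀ j, 0 ≤ b j) :
    I m (fun ω => ∑ j, b j * (F j).indicator (fun _ => (1:ℝ)) ω) = ∑ j, b j * m.μ (F j) := by
  apply le_antisymm
  · apply csSup_le (S_nonempty ?_)
    · exact S_le_of_dominated hb (fun ω => le_rfl)
    · intro ω
      exact Finset.sum_nonneg fun j _ => mul_nonneg (hb j)
        (Set.indicator_nonneg (fun _ _ => zero_le_one) ω)
  · exact le_csSup (bddAbove_S_of_dominated hb (fun ω => le_rfl)) (mem_S hb (fun ω => le_rfl))

/-- superadditivity: concatenation of lower sums. -/
lemma add_mem_S {m : FinAddMeasure Ω} {g1 g2 : Ω → ℝ} {r1 r2 : ℝ}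
    (h1 : r1 ∈ S m g1) (h2 : r2 ∈ S m g2) : r1 + r2 ∈ S m (fun ω => g1 ω + g2 ω) := by
  obtain ⟨n1, a1, E1, ha1, -, hle1, rfl⟩ := h1
  obtain ⟨n2, a2, E2, ha2, -, hle2, rfl⟩ := h2
  have := mem_S_fintype (m := m) (g := fun ω => g1 ω + g2 ω) (ι := Fin n1 ⊕ Fin n2)
    (Sum.elim a1 a2) (Sum.elim E1 E2) (by rintro (i | j); exacts [ha1 i, ha2 j]) ?_
  · simpa [Fintype.sum_sum_type] using this
  · intro ω
    simpa [Fintype.sum_sum_type] using add_le_add (hle1 ω) (hle2 ω)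

lemma layer_bounds {x M ε : ℝ} (hε : 0 < ε) (hx : 0 ≤ x) (hxM : x ≤ M) :
    (∑ k ∈ Finset.range ⌈M/ε⌉₊, if ((k:ℝ)+1)*ε ≤ x then ε else 0) ≤ x ∧
    x ≤ (∑ k ∈ Finset.range ⌈M/ε⌉₊, if ((k:ℝ)+1)*ε ≤ x then ε else 0) + ε := by
  classical
  set K := ⌈M/ε⌉₊ with hK
  set j := ⌊x/ε⌋₊ with hj
  have hcond : ∀ k : ℕ, (((k:ℝ)+1)*ε ≤ x ↔ k < j) := by
    intro k
    rw [hj, Nat.lt_iff_add_one_le, Nat.le_floor_iff (by positivity)]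
    push_cast
    rw [le_div_iff₀ hε]
  have hfilter : (Finset.range K).filter (fun k : ℕ => ((k:ℝ)+1)*ε ≤ x)
      = Finset.range (min j K) := by
    ext k
    simp only [Finset.mem_filter, Finset.mem_range, hcond k, lt_min_iff]
    tauto
  have hsum : (∑ k ∈ Finset.range K, if ((k:ℝ)+1)*ε ≤ x then ε else 0)
      = ((min j K : ℕ) : ℝ) * ε := by
    rw [Finset.sum_ite, hfilter]
    simp [mul_comm]
  constructor
  · rw [hsum]
    calc ((min j K : ℕ) : ℝ) * ε ≤ (j : ℝ) * ε := by
          have : (min j K : ℕ) ≤ j := min_le_left _ _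
          exact mul_le_mul_of_nonneg_right (by exact_mod_cast this) hε.le
      _ ≤ (x/ε) * ε := mul_le_mul_of_nonneg_right (Nat.floor_le (by positivity)) hε.le
      _ = x := by field_simp
  · rw [hsum]
    rcases le_or_gt j K with hjK | hjK
    · rw [min_eq_left hjK]
      have : x/ε < j + 1 := Nat.lt_floor_add_one _
      have : x < (j+1)*ε := by
        rw [← div_lt_iff₀ hε] at *
        push_cast
        linarith
      nlinarith
    · rw [min_eq_right hjK.le]
      have hMK : M ≤ (K:ℝ) * ε := by
        have := Nat.le_ceil (M/ε)
        rw [hK]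
        calc M = (M/ε)*ε := by field_simp
          _ ≤ (K:ℝ)*ε := mul_le_mul_of_nonneg_right (by exact_mod_cast this) hε.le
      nlinarith

lemma layer (m : FinAddMeasure Ω) (x : Ω → ℝ) {M ε : ℝ} (hε : 0 < ε)
    (hxn : ∀ ω, 0 ≤ x ω) (hxM : ∀ ω, x ω ≤ M) :
    ∃ (K : ℕ) (A : ℕ → Set Ω),
      (∀ ω, (∑ k ∈ Finset.range K, ε * (A k).indicator (fun _ => (1:ℝ)) ω) ≤ x ω) ∧
      (∀ ω, x ω ≤ (∑ k ∈ Finset.range K, ε * (A k).indicator (fun _ => (1:ℝ)) ω) + ε) := by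
  classical
  have hind : ∀ (k : ℕ) (ω : Ω), ε * ({ω' | ((k:ℝ)+1)*ε ≤ x ω'} : Set Ω).indicator
      (fun _ => (1:ℝ)) ω = if ((k:ℝ)+1)*ε ≤ x ω then ε else 0 := by
    intro k ω
    by_cases hk : ((k:ℝ)+1)*ε ≤ x ω
    · rw [if_pos hk, Set.indicator_of_mem (show ω ∈ {ω' | ((k:ℝ)+1)*ε ≤ x ω'} from hk), mul_one]
    · rw [if_neg hk, Set.indicator_of_notMem
        (show ω ∉ {ω' | ((k:ℝ)+1)*ε ≤ x ω'} from hk), mul_zero]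
  refine ⟨⌈M/ε⌉₊, fun k => {ω' | ((k:ℝ)+1)*ε ≤ x ω'}, ?_, ?_⟩ <;> intro ω
  · have h := (layer_bounds hε (hxn ω) (hxM ω)).1
    refine le_trans (le_of_eq ?_) h
    exact Finset.sum_congr rfl fun k _ => hind k ω
  · have h := (layer_bounds hε (hxn ω) (hxM ω)).2
    refine h.trans (add_le_add_left (le_of_eq ?_) ε)
    exact (Finset.sum_congr rfl fun k _ => hind k ω).symm

/-- The splitting lemma: any lower sum for `g ≤ h1 + h2` is bounded by `I h1 + I h2`. -/
lemma split (m : FinAddMeasure Ω) {h1 h2 : Ω → ℝ}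
    (h1n : ∀ ω, 0 ≤ h1 ω) (h2n : ∀ ω, 0 ≤ h2 ω)
    (hb1 : BddAbove (S m h1)) (hb2 : BddAbove (S m h2)) {g : Ω → ℝ}
    (hg : ∀ ω, g ω ≤ h1 ω + h2 ω) :
    ∀ r ∈ S m g, r ≤ I m h1 + I m h2 := by
  classical
  rintro r ⟨n, a, E, ha, -, hle0, rfl⟩
  set s : Ω → ℝ := fun ω => ∑ i, a i * (E i).indicator (fun _ => (1:ℝ)) ω with hs
  have hsn : ∀ ω, 0 ≤ s ω := fun ω => Finset.sum_nonneg fun i _ =>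
    mul_nonneg (ha i) (Set.indicator_nonneg (fun _ _ => zero_le_one) ω)
  have hsM : ∀ ω, s ω ≤ ∑ i, a i := by
    intro ω
    refine Finset.sum_le_sum fun i _ => ?_
    have hile : (E i).indicator (fun _ => (1:ℝ)) ω ≤ 1 := by
      classical
      by_cases h : ω ∈ E i
      · rw [Set.indicator_of_mem h]
      · rw [Set.indicator_of_notMem h]; exact zero_le_one
    calc a i * (E i).indicator (fun _ => (1:ℝ)) ω ≤ a i * 1 :=
        mul_le_mul_of_nonneg_left hile (ha i)
      _ = a i := mul_one _
  have hle : ∀ ω, s ω ≤ h1 ω + h2 ω := fun ω => (hle0 ω).trans (hg ω)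
  set M := ∑ i, a i with hM
  refine le_of_forall_pos_le_add ?_
  intro δ hδ
  set ε := δ / (2 * m.μ Set.univ + 1) with hε
  have hμu : 0 ≤ m.μ Set.univ := m.nonneg _
  have hεpos : 0 < ε := by positivity
  -- first layer
  obtain ⟨K1, A1, ht1le, ht1ge⟩ := layer m (fun ω => min (s ω) (h1 ω)) hεpos
    (fun ω => le_min (hsn ω) (h1n ω)) (fun ω => (min_le_left _ _).trans (hsM ω))
  set t1 : Ω → ℝ := fun ω => ∑ k ∈ Finset.range K1, ε * (A1 k).indicator (fun _ => (1:ℝ)) ω with hT1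
  have ht1n : ∀ ω, 0 ≤ t1 ω := fun ω => Finset.sum_nonneg fun k _ =>
    mul_nonneg hεpos.le (Set.indicator_nonneg (fun _ _ => zero_le_one) ω)
  have ht1s : ∀ ω, t1 ω ≤ s ω := fun ω => (ht1le ω).trans (min_le_left _ _)
  have ht1h1 : ∀ ω, t1 ω ≤ h1 ω := fun ω => (ht1le ω).trans (min_le_right _ _)
  -- second layer
  have hx2n : ∀ ω, 0 ≤ min (s ω - t1 ω) (h2 ω) := fun ω => le_min (by linarith [ht1s ω]) (h2n ω)
  have hx2M : ∀ ω, min (s ω - t1 ω) (h2 ω) ≤ M := fun ω =>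
    (min_le_left _ _).trans (by linarith [ht1n ω, hsM ω])
  obtain ⟨K2, A2, ht2le, ht2ge⟩ := layer m (fun ω => min (s ω - t1 ω) (h2 ω)) hεpos hx2n hx2M
  set t2 : Ω → ℝ := fun ω => ∑ k ∈ Finset.range K2, ε * (A2 k).indicator (fun _ => (1:ℝ)) ω with hT2
  have ht2h2 : ∀ ω, t2 ω ≤ h2 ω := fun ω => (ht2le ω).trans (min_le_right _ _)
  -- pointwise bound s ≤ t1 + t2 + 2ε
  have hpt : ∀ ω, s ω ≤ t1 ω + t2 ω + 2*ε := by
    intro ω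
    have h1' : min (s ω) (h1 ω) ≤ t1 ω + ε := ht1ge ω
    have hst1 : s ω - t1 ω ≤ h2 ω + ε := by
      rcases le_or_gt (s ω) (h1 ω) with h | h
      · rw [min_eq_left h] at h1'
        linarith [h2n ω]
      · rw [min_eq_right h.le] at h1'
        linarith [hle ω]
    have h2' : min (s ω - t1 ω) (h2 ω) ≤ t2 ω + ε := ht2ge ω
    rcases le_or_gt (s ω - t1 ω) (h2 ω) with h | h
    · rw [min_eq_left h] at h2'
      linarith
    · rw [min_eq_right h.le] at h2'
      linarith
  -- the big comparison
  have hval1 : (∑ k ∈ Finset.range K1, ε * m.μ (A1 k)) ≤ I m h1 := by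
    refine le_csSup hb1 ?_
    have := mem_S_fintype (m := m) (g := h1) (ι := Fin K1)
      (fun _ => ε) (fun k => A1 k.1) (fun _ => hεpos.le) ?_
    · rwa [Fin.sum_univ_eq_sum_range (fun k => ε * m.μ (A1 k))] at this
    · intro ω
      rw [Fin.sum_univ_eq_sum_range (fun k => ε * (A1 k).indicator (fun _ => (1:ℝ)) ω)]
      exact ht1h1 ω
  have hval2 : (∑ k ∈ Finset.range K2, ε * m.μ (A2 k)) ≤ I m h2 := by
    refine le_csSup hb2 ?_
    have := mem_S_fintype (m := m) (g := h2) (ι := Fin K2)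
      (fun _ => ε) (fun k => A2 k.1) (fun _ => hεpos.le) ?_
    · rwa [Fin.sum_univ_eq_sum_range (fun k => ε * m.μ (A2 k))] at this
    · intro ω
      rw [Fin.sum_univ_eq_sum_range (fun k => ε * (A2 k).indicator (fun _ => (1:ℝ)) ω)]
      exact ht2h2 ω
  have hcomp : (∑ i, a i * m.μ (E i)) ≤
      (∑ k ∈ Finset.range K1, ε * m.μ (A1 k)) + ((∑ k ∈ Finset.range K2, ε * m.μ (A2 k))
        + (2*ε) * m.μ Set.univ) := by
    have := comparison m (ι := Fin n ⊕ (Fin K1 ⊕ (Fin K2 ⊕ Fin 1)))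
      (Sum.elim a 0)
      (Sum.elim 0 (Sum.elim (fun _ => ε) (Sum.elim (fun _ => ε) (fun _ => 2*ε))))
      (by rintro (i | (k | (k | k))) <;> simp [ha, hεpos.le])
      (by rintro (i | (k | (k | k))) <;> simp [ha, hεpos.le] <;> positivity)
      (Sum.elim E (Sum.elim (fun k => A1 k.1) (Sum.elim (fun k => A2 k.1) (fun _ => Set.univ))))
      ?_
    · simpa [Fintype.sum_sum_type,
        Fin.sum_univ_eq_sum_range (fun k => ε * m.μ (A1 k)),
        Fin.sum_univ_eq_sum_range (fun k => ε * m.μ (A2 k))] using this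
    · intro ω
      have := hpt ω
      simp only [Fintype.sum_sum_type, Sum.elim_inl, Sum.elim_inr, Pi.zero_apply, zero_mul,
        Finset.sum_const_zero, add_zero, zero_add, Fin.sum_univ_one]
      rw [Fin.sum_univ_eq_sum_range (fun k => ε * (A1 k).indicator (fun _ => (1:ℝ)) ω),
        Fin.sum_univ_eq_sum_range (fun k => ε * (A2 k).indicator (fun _ => (1:ℝ)) ω)]
      simp only [hs, hT1, hT2] at this
      simp only [Set.indicator_univ]
      linarith
  have hεδ : ε * (2 * m.μ Set.univ + 1) = δ := by
    rw [hε]; field_simp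
  have hεμ : (2*ε) * m.μ Set.univ ≤ δ := by nlinarith [hεpos.le, hμu]
  linarith


lemma I_congr {m : FinAddMeasure Ω} {g1 g2 : Ω → ℝ} (h : ∀ ω, g1 ω = g2 ω) :
    I m g1 = I m g2 := by
  have : g1 = g2 := funext h
  rw [this]

lemma S_congr {m : FinAddMeasure Ω} {g1 g2 : Ω → ℝ} (h : ∀ ω, g1 ω = g2 ω) :
    S m g1 = S m g2 := by
  have : g1 = g2 := funext h
  rw [this]

lemma S_el_nonneg {m : FinAddMeasure Ω} {g : Ω → ℝ} : ∀ r ∈ S m g, 0 ≤ r := by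
  rintro r ⟨n, a, E, ha, -, -, rfl⟩
  exact Finset.sum_nonneg fun i _ => mul_nonneg (ha i) (m.nonneg _)

lemma I_zero_of_nonpos {m : FinAddMeasure Ω} {g : Ω → ℝ}
    (hg1 : ∀ ω, g ω ≤ 0) (hg2 : ∀ ω, 0 ≤ g ω) : I m g = 0 := by
  have hsub : S m g = {0} := by
    apply Set.eq_singleton_iff_unique_mem.mpr
    refine ⟨zero_mem_S hg2, fun r hr => ?_⟩
    have h1 := S_el_nonneg r hr
    have h2 : r ≤ 0 := by
      have := S_le_of_dominated (m := m) (g := g) (nb := 0)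
        (b := fun j => 0) (F := fun _ => (∅ : Set Ω)) (fun j => le_rfl)
        (by intro ω; simpa using hg1 ω) r hr
      simpa using this
    linarith
  rw [I]; rw [hsub]; exact csSup_singleton 0

/-- sum of two finitely additive measures. -/
def famAdd (m1 m2 : FinAddMeasure Ω) : FinAddMeasure Ω where
  μ := fun E => m1.μ E + m2.μ E
  nonneg := fun E => add_nonneg (m1.nonneg E) (m2.nonneg E)
  empty := by show m1.μ ∅ + m2.μ ∅ = 0; rw [m1.empty, m2.empty]; ring
  add := fun E F h => by
    show m1.μ (E ∪ F) + m2.μ (E ∪ F) = _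
    rw [m1.add E F h, m2.add E F h]; ring

/-- scalar multiple of a finitely additive measure. -/
def famSmul (c : ℝ) (hc : 0 ≤ c) (m : FinAddMeasure Ω) : FinAddMeasure Ω where
  μ := fun E => c * m.μ E
  nonneg := fun E => mul_nonneg hc (m.nonneg E)
  empty := by show c * m.μ ∅ = 0; rw [m.empty]; ring
  add := fun E F h => by
    show c * m.μ (E ∪ F) = _
    rw [m.add E F h]; ring

/-- the zero measure. -/
def zeroFAM (Ω : Type*) : FinAddMeasure Ω where
  μ := fun _ => 0
  nonneg := fun _ => le_rfl
  empty := rfl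
  add := fun _ _ _ => by ring

lemma S_famAdd {m1 m2 : FinAddMeasure Ω} {g : Ω → ℝ} :
    ∀ r ∈ S (famAdd m1 m2) g, ∃ r1 ∈ S m1 g, ∃ r2 ∈ S m2 g, r = r1 + r2 := by
  rintro r ⟨n, a, E, ha, -, hle, rfl⟩
  refine ⟨∑ i, a i * m1.μ (E i), mem_S ha hle, ∑ i, a i * m2.μ (E i), mem_S ha hle, ?_⟩
  rw [← Finset.sum_add_distrib]
  exact Finset.sum_congr rfl fun i _ => by simp [famAdd]; ring

lemma bddAbove_S_famAdd {m1 m2 : FinAddMeasure Ω} {g : Ω → ℝ}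
    (h1 : BddAbove (S m1 g)) (h2 : BddAbove (S m2 g)) : BddAbove (S (famAdd m1 m2) g) := by
  obtain ⟨B1, hB1⟩ := h1
  obtain ⟨B2, hB2⟩ := h2
  refine ⟨B1 + B2, fun r hr => ?_⟩
  obtain ⟨r1, hr1, r2, hr2, rfl⟩ := S_famAdd r hr
  exact add_le_add (hB1 hr1) (hB2 hr2)

lemma I_mono_m {m1 m2 : FinAddMeasure Ω} {g : Ω → ℝ}
    (hm : ∀ E, m1.μ E ≤ m2.μ E) (hg : ∀ ω, 0 ≤ g ω) (hb2 : BddAbove (S m2 g)) :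
    BddAbove (S m1 g) ∧ I m1 g ≤ I m2 g := by
  have key : ∀ r ∈ S m1 g, r ≤ I m2 g := by
    rintro r ⟨n, a, E, ha, -, hle, rfl⟩
    calc (∑ i, a i * m1.μ (E i)) ≤ ∑ i, a i * m2.μ (E i) :=
        Finset.sum_le_sum fun i _ => mul_le_mul_of_nonneg_left (hm (E i)) (ha i)
      _ ≤ I m2 g := le_csSup hb2 (mem_S ha hle)
  exact ⟨⟨I m2 g, key⟩, csSup_le (S_nonempty hg) key⟩

lemma I_famSmul {c : ℝ} (hc : 0 ≤ c) {m : FinAddMeasure Ω} {g : Ω → ℝ}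
    (hg : ∀ ω, 0 ≤ g ω) (hb : BddAbove (S m g)) :
    BddAbove (S (famSmul c hc m) g) ∧ I (famSmul c hc m) g = c * I m g := by
  have hup : ∀ r ∈ S (famSmul c hc m) g, r ≤ c * I m g := by
    rintro r ⟨n, a, E, ha, -, hle, rfl⟩
    have : (∑ i, a i * (famSmul c hc m).μ (E i)) = c * ∑ i, a i * m.μ (E i) := by
      rw [Finset.mul_sum]
      exact Finset.sum_congr rfl fun i _ => by simp [famSmul]; ring
    rw [this]
    exact mul_le_mul_of_nonneg_left (le_csSup hb (mem_S ha hle)) hc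
  have hbdd : BddAbove (S (famSmul c hc m) g) := ⟨c * I m g, hup⟩
  refine ⟨hbdd, le_antisymm (csSup_le (S_nonempty hg) hup) ?_⟩
  rcases eq_or_lt_of_le hc with rfl | hcpos
  · rw [zero_mul]; exact le_csSup hbdd (zero_mem_S (m := famSmul 0 le_rfl m) hg)
  · have hlow : ∀ r' ∈ S m g, c * r' ≤ I (famSmul c hc m) g := by
      rintro r' ⟨n, a, E, ha, -, hle, rfl⟩
      refine le_csSup hbdd ?_
      have := mem_S (m := famSmul c hc m) ha hle
      have heq : (∑ i, a i * (famSmul c hc m).μ (E i)) = c * ∑ i, a i * m.μ (E i) := by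
        rw [Finset.mul_sum]
        exact Finset.sum_congr rfl fun i _ => by simp [famSmul]; ring
      rwa [heq] at this
    have : I m g ≤ I (famSmul c hc m) g / c := by
      refine csSup_le (S_nonempty hg) fun r' hr' => ?_
      rw [le_div_iff₀ hcpos, mul_comm]
      exact hlow r' hr'
    calc c * I m g ≤ c * (I (famSmul c hc m) g / c) := mul_le_mul_of_nonneg_left this hc
      _ = I (famSmul c hc m) g := by field_simp

/-- scaling in the function argument. -/
lemma mem_S_smul_g {m : FinAddMeasure Ω} {g : Ω → ℝ} {c : ℝ} (hc : 0 ≤ c) {r : ℝ}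
    (hr : r ∈ S m g) : c * r ∈ S m (fun ω => c * g ω) := by
  obtain ⟨n, a, E, ha, -, hle, rfl⟩ := hr
  have := mem_S (m := m) (g := fun ω => c * g ω) (a := fun i => c * a i) (E := E)
    (fun i => mul_nonneg hc (ha i)) ?_
  · rwa [show (∑ i, (c * a i) * m.μ (E i)) = c * ∑ i, a i * m.μ (E i) by
      rw [Finset.mul_sum]; exact Finset.sum_congr rfl fun i _ => by ring] at this
  · intro ω
    have := hle ω
    calc (∑ i, (c * a i) * (E i).indicator (fun _ => (1:ℝ)) ω)
        = c * ∑ i, a i * (E i).indicator (fun _ => (1:ℝ)) ω := by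
          rw [Finset.mul_sum]; exact Finset.sum_congr rfl fun i _ => by ring
      _ ≤ c * g ω := mul_le_mul_of_nonneg_left this hc

lemma I_smul_g {m : FinAddMeasure Ω} {g : Ω → ℝ} {c : ℝ} (hc : 0 < c)
    (hg : ∀ ω, 0 ≤ g ω) (hb : BddAbove (S m g)) :
    I m (fun ω => c * g ω) = c * I m g := by
  have hup : ∀ r ∈ S m (fun ω => c * g ω), r ≤ c * I m g := by
    intro r hr
    have h2 : c⁻¹ * r ∈ S m g := by
      have := mem_S_smul_g (m := m) (g := fun ω => c * g ω) (c := c⁻¹)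
        (by positivity) hr
      refine S_mono_g (fun ω => ?_) this
      rw [← mul_assoc, inv_mul_cancel₀ hc.ne', one_mul]
    have := le_csSup hb h2
    calc r = c * (c⁻¹ * r) := by field_simp
      _ ≤ c * I m g := mul_le_mul_of_nonneg_left this hc.le
  have hbdd : BddAbove (S m (fun ω => c * g ω)) := ⟨c * I m g, hup⟩
  refine le_antisymm (csSup_le (S_nonempty fun ω => mul_nonneg hc.le (hg ω)) hup) ?_
  have hlow : ∀ r' ∈ S m g, c * r' ≤ I m (fun ω => c * g ω) :=
    fun r' hr' => le_csSup hbdd (mem_S_smul_g hc.le hr')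
  have : I m g ≤ I m (fun ω => c * g ω) / c := by
    refine csSup_le (S_nonempty hg) fun r' hr' => ?_
    rw [le_div_iff₀ hc, mul_comm]
    exact hlow r' hr'
  calc c * I m g ≤ c * (I m (fun ω => c * g ω) / c) := mul_le_mul_of_nonneg_left this hc.le
    _ = I m (fun ω => c * g ω) := by field_simp

lemma exists_approx {m : FinAddMeasure Ω} {g : Ω → ℝ} (hg : ∀ ω, 0 ≤ g ω)
    {ε : ℝ} (hε : 0 < ε) : ∃ r ∈ S m g, I m g - ε < r := by
  rcases exists_lt_of_lt_csSup (S_nonempty hg) (show I m g - ε < sSup (S m g) by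
    change I m g - ε < I m g; linarith) with ⟨r, hr, hlt⟩
  exact ⟨r, hr, hlt⟩

lemma faInt_eq (m : FinAddMeasure Ω) (f : Ω → ℝ) :
    faInt m f = I m (fun ω => max (f ω) 0) - I m (fun ω => max (-(f ω)) 0) := rfl

lemma faInt_abs (m : FinAddMeasure Ω) (f : Ω → ℝ) :
    faInt m (fun ω => |f ω|) = I m (fun ω => |f ω|) := by
  rw [faInt_eq]
  have h1 : I m (fun ω => max (|f ω|) 0) = I m (fun ω => |f ω|) :=
    I_congr fun ω => max_eq_left (abs_nonneg _)
  have h2 : I m (fun ω => max (-(|f ω|)) 0) = 0 :=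
    I_zero_of_nonpos (fun ω => max_le (neg_nonpos.mpr (abs_nonneg _)) le_rfl)
      (fun ω => le_max_right _ _)
  rw [h1, h2]; ring

lemma I_indicator (m : FinAddMeasure Ω) (E : Set Ω) :
    I m (fun ω => E.indicator (fun _ => (1:ℝ)) ω) = m.μ E := by
  have := I_simple (m := m) (nb := 1) (b := fun _ => (1:ℝ)) (F := fun _ => E)
    (fun _ => zero_le_one)
  simp only [Fin.sum_univ_one, one_mul] at this
  exact this

lemma S_zeroFAM {g : Ω → ℝ} (hg : ∀ ω, 0 ≤ g ω) : S (zeroFAM Ω) g = {0} := by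
  apply Set.eq_singleton_iff_unique_mem.mpr
  refine ⟨zero_mem_S hg, ?_⟩
  rintro r ⟨n, a, E, -, -, -, rfl⟩
  simp [zeroFAM]

lemma faInt_zeroFAM (f : Ω → ℝ) : faInt (zeroFAM Ω) f = 0 := by
  rw [faInt_eq, I, I, S_zeroFAM (fun ω => le_max_right _ _),
    S_zeroFAM (fun ω => le_max_right _ _)]
  simp



lemma pos_sub_neg (x : ℝ) : max x 0 - max (-x) 0 = x := by
  rcases le_total 0 x with h | h
  · rw [max_eq_left h, max_eq_right (neg_nonpos.mpr h)]; ring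
  · rw [max_eq_right h, max_eq_left (neg_nonneg.mpr h)]; ring

lemma simple_nonneg {n : ℕ} {a : Fin n → ℝ} (E : Fin n → Set Ω) (ha : ∀ i, 0 ≤ a i) (ω : Ω) :
    0 ≤ ∑ i, a i * (E i).indicator (fun _ => (1:ℝ)) ω :=
  Finset.sum_nonneg fun i _ => mul_nonneg (ha i)
    (Set.indicator_nonneg (fun _ _ => zero_le_one) ω)

/-- The subspace of functions with bounded lower sums of the absolute value. -/
noncomputable def V (μ : FinAddMeasure Ω) : Submodule ℝ (Ω → ℝ) where
  carrier := {f | BddAbove (S μ (fun ω => |f ω|))}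
  zero_mem' := by
    refine bddAbove_S_of_dominated (nb := 0) (b := fun j => 0) (F := fun _ => (∅ : Set Ω))
      (fun j => le_rfl) ?_
    intro ω; simp
  add_mem' := by
    intro f g hf hg
    show BddAbove (S μ (fun ω => |(f + g) ω|))
    refine ⟨I μ (fun ω => |f ω|) + I μ (fun ω => |g ω|), fun r hr => ?_⟩
    refine split μ (fun ω => abs_nonneg _) (fun ω => abs_nonneg _) hf hg ?_ r hr
    intro ω
    exact abs_add_le (f ω) (g ω)
  smul_mem' := by
    intro c f hf
    show BddAbove (S μ (fun ω => |(c • f) ω|))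
    rcases eq_or_ne c 0 with rfl | hc
    · refine bddAbove_S_of_dominated (nb := 0) (b := fun j => 0) (F := fun _ => (∅ : Set Ω))
        (fun j => le_rfl) ?_
      intro ω; simp
    · refine ⟨|c| * I μ (fun ω => |f ω|), fun r hr => ?_⟩
      have h1 : |c|⁻¹ * r ∈ S μ (fun ω => |f ω|) := by
        have h2 := mem_S_smul_g (m := μ) (g := fun ω => |(c • f) ω|) (c := |c|⁻¹)
          (by positivity) hr
        refine S_mono_g (fun ω => ?_) h2
        show |c|⁻¹ * |(c • f) ω| ≤ |f ω|
        have h3 : |(c • f) ω| = |c| * |f ω| := by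
          simp [abs_mul]
        rw [h3, ← mul_assoc, inv_mul_cancel₀ (abs_ne_zero.mpr hc), one_mul]
      have h4 := le_csSup hf h1
      calc r = |c| * (|c|⁻¹ * r) := by field_simp
        _ ≤ |c| * I μ (fun ω => |f ω|) :=
          mul_le_mul_of_nonneg_left h4 (abs_nonneg c)

lemma ind_mem_V (μ : FinAddMeasure Ω) (E : Set Ω) :
    (fun ω => E.indicator (fun _ => (1:ℝ)) ω) ∈ V μ := by
  refine bddAbove_S_of_dominated (nb := 1) (b := fun _ => (1:ℝ)) (F := fun _ => E)
    (fun _ => zero_le_one) ?_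
  intro ω
  simp only [Fin.sum_univ_one, one_mul]
  rw [abs_of_nonneg (Set.indicator_nonneg (fun _ _ => zero_le_one) ω)]

noncomputable def indV (μ : FinAddMeasure Ω) (E : Set Ω) : V μ :=
  ⟨fun ω => E.indicator (fun _ => (1:ℝ)) ω, ind_mem_V μ E⟩

/-- key single-measure approximation bound. -/
lemma approx_bound {lam μ : FinAddMeasure Ω} {C : ℝ} (hC : 0 ≤ C)
    (hle : ∀ E, lam.μ E ≤ C * μ.μ E)
    {g : Ω → ℝ} (hg0 : ∀ ω, 0 ≤ g ω) (hgB : BddAbove (S μ g))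
    {n : ℕ} {a : Fin n → ℝ} {E : Fin n → Set Ω} (ha : ∀ i, 0 ≤ a i)
    (hlea : ∀ ω, (∑ i, a i * (E i).indicator (fun _ => (1:ℝ)) ω) ≤ g ω)
    {ε : ℝ} (hε : 0 < ε)
    (hval : I μ g - ε < ∑ i, a i * μ.μ (E i)) :
    BddAbove (S lam g) ∧ I μ (fun ω => g ω - ∑ i, a i * (E i).indicator (fun _ => (1:ℝ)) ω) ≤ ε ∧
      |I lam g - ∑ i, a i * lam.μ (E i)| ≤ C * ε := by
  have hd0 : ∀ ω, 0 ≤ g ω - ∑ i, a i * (E i).indicator (fun _ => (1:ℝ)) ω :=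
    fun ω => by linarith [hlea ω]
  have hdB : BddAbove (S μ (fun ω => g ω - ∑ i, a i * (E i).indicator (fun _ => (1:ℝ)) ω)) :=
    hgB.mono (S_mono_g fun ω => by linarith [simple_nonneg E ha ω])
  have hId : I μ (fun ω => g ω - ∑ i, a i * (E i).indicator (fun _ => (1:ℝ)) ω) ≤ ε := by
    refine csSup_le (S_nonempty hd0) ?_
    intro r' hr'
    have h1 : (∑ i, a i * μ.μ (E i)) ∈
        S μ (fun ω => ∑ i, a i * (E i).indicator (fun _ => (1:ℝ)) ω) :=
      mem_S ha (fun ω => le_rfl)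
    have h2 := add_mem_S hr' h1
    have h3 : r' + (∑ i, a i * μ.μ (E i)) ∈ S μ g :=
      S_mono_g (fun ω => le_of_eq (by ring)) h2
    have h4 : r' + (∑ i, a i * μ.μ (E i)) ≤ I μ g := le_csSup hgB h3
    linarith
  have hCd := I_famSmul hC hd0 hdB
  have hlamd := I_mono_m hle hd0 hCd.1
  have hlamd2 : I lam (fun ω => g ω - ∑ i, a i * (E i).indicator (fun _ => (1:ℝ)) ω) ≤ C * ε := by
    refine hlamd.2.trans ?_
    rw [hCd.2]
    exact mul_le_mul_of_nonneg_left hId hC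
  have hCg := I_famSmul hC hg0 hgB
  have hlamg := I_mono_m hle hg0 hCg.1
  have hsB : BddAbove (S lam (fun ω => ∑ i, a i * (E i).indicator (fun _ => (1:ℝ)) ω)) :=
    hlamg.1.mono (S_mono_g hlea)
  have hIs : I lam (fun ω => ∑ i, a i * (E i).indicator (fun _ => (1:ℝ)) ω)
      = ∑ i, a i * lam.μ (E i) := I_simple ha
  have hlow : (∑ i, a i * lam.μ (E i)) ≤ I lam g := le_csSup hlamg.1 (mem_S ha hlea)
  have hup : I lam g ≤ (∑ i, a i * lam.μ (E i)) + C * ε := by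
    refine csSup_le (S_nonempty hg0) ?_
    intro r hr
    have := split lam (simple_nonneg E ha) hd0 hsB hlamd.1
      (g := g) (fun ω => le_of_eq (by ring)) r hr
    rw [hIs] at this
    linarith
  exact ⟨hlamg.1, hId, abs_le.mpr ⟨by linarith, by linarith⟩⟩

/-- CORE: representation of a dominated linear functional value by the integral. -/
theorem core (μ : FinAddMeasure Ω) (C : ℝ) (hC : 0 ≤ C)
    (ψ : (V μ) →ₗ[ℝ] ℝ)
    (hψ : ∀ x : V μ, |ψ x| ≤ C * I μ (fun ω => |(x : Ω → ℝ) ω|))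
    (lamP lamN : FinAddMeasure Ω)
    (hPle : ∀ E, lamP.μ E ≤ C * μ.μ E) (hNle : ∀ E, lamN.μ E ≤ C * μ.μ E)
    (hlam : ∀ E : Set Ω, lamP.μ E - lamN.μ E = ψ (indV μ E))
    (f : Ω → ℝ) (hfV : f ∈ V μ)
    (hfp : BddAbove (S μ (fun ω => max (f ω) 0)))
    (hfn : BddAbove (S μ (fun ω => max (-(f ω)) 0))) :
    FAIntegrable lamP f ∧ FAIntegrable lamN f ∧
      ψ ⟨f, hfV⟩ = faInt lamP f - faInt lamN f := by
  classical
  have hgp0 : ∀ ω, (0:ℝ) ≤ max (f ω) 0 := fun ω => le_max_right _ _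
  have hgn0 : ∀ ω, (0:ℝ) ≤ max (-(f ω)) 0 := fun ω => le_max_right _ _
  have hple : ∀ ω, max (f ω) 0 ≤ |f ω| := fun ω => max_le (le_abs_self _) (abs_nonneg _)
  have hnle : ∀ ω, max (-(f ω)) 0 ≤ |f ω| := fun ω => max_le (neg_le_abs _) (abs_nonneg _)
  have habs : BddAbove (S μ (fun ω => |f ω|)) := hfV
  -- integrability of f for lamP, lamN
  have hCgp := I_famSmul hC hgp0 hfp
  have hCgn := I_famSmul hC hgn0 hfn
  have hPp := I_mono_m hPle hgp0 hCgp.1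
  have hPn := I_mono_m hPle hgn0 hCgn.1
  have hNp := I_mono_m hNle hgp0 hCgp.1
  have hNn := I_mono_m hNle hgn0 hCgn.1
  refine ⟨⟨hPp.1, hPn.1⟩, ⟨hNp.1, hNn.1⟩, ?_⟩
  -- main identity
  have key : ∀ ε : ℝ, 0 < ε →
      |ψ ⟨f, hfV⟩ - (faInt lamP f - faInt lamN f)| ≤ 6 * C * ε := by
    intro ε hε
    obtain ⟨rp, hrpS, hrp⟩ := exists_approx (m := μ) hgp0 hε
    obtain ⟨np, ap, Ep, hap, -, hlep, rfl⟩ := hrpS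
    obtain ⟨rn, hrnS, hrn⟩ := exists_approx (m := μ) hgn0 hε
    obtain ⟨nn, an, En, han, -, hlen, rfl⟩ := hrnS
    -- four approximation bounds
    obtain ⟨-, hIdp, hPgp⟩ := approx_bound hC hPle hgp0 hfp hap hlep hε hrp
    obtain ⟨-, hIdn, hPgn⟩ := approx_bound hC hPle hgn0 hfn han hlen hε hrn
    obtain ⟨-, -, hNgp⟩ := approx_bound hC hNle hgp0 hfp hap hlep hε hrp
    obtain ⟨-, -, hNgn⟩ := approx_bound hC hNle hgn0 hfn han hlen hε hrn
    -- the simple element of V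
    set shat : V μ := (∑ i, ap i • indV μ (Ep i)) - (∑ j, an j • indV μ (En j)) with hshat
    have hcoe : ∀ ω, (shat : Ω → ℝ) ω =
        (∑ i, ap i * (Ep i).indicator (fun _ => (1:ℝ)) ω)
          - (∑ j, an j * (En j).indicator (fun _ => (1:ℝ)) ω) := by
      intro ω
      simp only [hshat, AddSubgroupClass.coe_sub, AddSubmonoidClass.coe_finset_sum,
        SetLike.val_smul, Pi.sub_apply, Finset.sum_apply, Pi.smul_apply, smul_eq_mul, indV]
    have hψs : ψ shat = ((∑ i, ap i * lamP.μ (Ep i)) - (∑ j, an j * lamP.μ (En j)))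
        - ((∑ i, ap i * lamN.μ (Ep i)) - (∑ j, an j * lamN.μ (En j))) := by
      rw [hshat, map_sub, map_sum, map_sum]
      have h1 : (∑ i, ψ (ap i • indV μ (Ep i)))
          = ∑ i, (ap i * lamP.μ (Ep i) - ap i * lamN.μ (Ep i)) := by
        refine Finset.sum_congr rfl fun i _ => ?_
        rw [map_smul, smul_eq_mul, ← hlam (Ep i)]; ring
      have h2 : (∑ j, ψ (an j • indV μ (En j)))
          = ∑ j, (an j * lamP.μ (En j) - an j * lamN.μ (En j)) := by
        refine Finset.sum_congr rfl fun j _ => ?_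
        rw [map_smul, smul_eq_mul, ← hlam (En j)]; ring
      rw [h1, h2, Finset.sum_sub_distrib, Finset.sum_sub_distrib]
      ring
    -- ψ f - ψ shat
    have hdiff : |ψ ⟨f, hfV⟩ - ψ shat| ≤ C * (2 * ε) := by
      rw [← map_sub]
      refine (hψ _).trans ?_
      have hcoe2 : ∀ ω, ((⟨f, hfV⟩ - shat : V μ) : Ω → ℝ) ω =
          f ω - ((∑ i, ap i * (Ep i).indicator (fun _ => (1:ℝ)) ω)
            - (∑ j, an j * (En j).indicator (fun _ => (1:ℝ)) ω)) := by
        intro ω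
        rw [AddSubgroupClass.coe_sub, Pi.sub_apply, hcoe ω]
      have hIabs : I μ (fun ω => |((⟨f, hfV⟩ - shat : V μ) : Ω → ℝ) ω|) ≤ 2 * ε := by
        rw [I_congr (fun ω => by rw [hcoe2 ω])]
        refine csSup_le (S_nonempty fun ω => abs_nonneg _) ?_
        intro r hr
        have hdp0 : ∀ ω, 0 ≤ max (f ω) 0 - ∑ i, ap i * (Ep i).indicator (fun _ => (1:ℝ)) ω :=
          fun ω => by linarith [hlep ω]
        have hdn0 : ∀ ω, 0 ≤ max (-(f ω)) 0 - ∑ j, an j * (En j).indicator (fun _ => (1:ℝ)) ω :=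
          fun ω => by linarith [hlen ω]
        have hdpB : BddAbove (S μ (fun ω => max (f ω) 0
            - ∑ i, ap i * (Ep i).indicator (fun _ => (1:ℝ)) ω)) :=
          hfp.mono (S_mono_g fun ω => by linarith [simple_nonneg Ep hap ω])
        have hdnB : BddAbove (S μ (fun ω => max (-(f ω)) 0
            - ∑ j, an j * (En j).indicator (fun _ => (1:ℝ)) ω)) :=
          hfn.mono (S_mono_g fun ω => by linarith [simple_nonneg En han ω])
        have hsplit := split μ hdp0 hdn0 hdpB hdnB (g := fun ω =>
          |f ω - ((∑ i, ap i * (Ep i).indicator (fun _ => (1:ℝ)) ω)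
            - (∑ j, an j * (En j).indicator (fun _ => (1:ℝ)) ω))|) ?_ r hr
        · linarith
        · intro ω
          have hfd : f ω = max (f ω) 0 - max (-(f ω)) 0 := (pos_sub_neg (f ω)).symm
          rw [abs_le]
          exact ⟨by linarith [hdp0 ω, hdn0 ω], by linarith [hdp0 ω, hdn0 ω]⟩
      exact mul_le_mul_of_nonneg_left hIabs hC
    -- combine
    rw [faInt_eq, faInt_eq]
    obtain ⟨ha1, ha2⟩ := abs_le.mp hdiff
    obtain ⟨hb1, hb2⟩ := abs_le.mp hPgp
    obtain ⟨hc1, hc2⟩ := abs_le.mp hPgn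
    obtain ⟨hd1, hd2⟩ := abs_le.mp hNgp
    obtain ⟨he1, he2⟩ := abs_le.mp hNgn
    rw [hψs] at ha1 ha2
    rw [abs_le]
    constructor <;> linarith
  -- conclude equality
  have hX : |ψ ⟨f, hfV⟩ - (faInt lamP f - faInt lamN f)| ≤ 0 := by
    refine le_of_forall_pos_le_add ?_
    intro δ hδ
    have h6 : (0:ℝ) < 6 * C + 1 := by linarith
    have := key (δ / (6 * C + 1)) (by positivity)
    have h7 : 6 * C * (δ / (6 * C + 1)) ≤ δ := by
      rw [mul_div_assoc', div_le_iff₀ h6]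
      nlinarith
    linarith
  have := abs_nonpos_iff.mp hX
  linarith [this]



lemma mem_V_iff (μ : FinAddMeasure Ω) (f : Ω → ℝ) :
    f ∈ V μ ↔ BddAbove (S μ (fun ω => |f ω|)) := Iff.rfl

lemma indV_coe (μ : FinAddMeasure Ω) (E : Set Ω) :
    ((indV μ E : Ω → ℝ)) = fun ω => E.indicator (fun _ => (1:ℝ)) ω := rfl


lemma abs_eq_pos_add_neg (x : ℝ) : |x| = max x 0 + max (-x) 0 := by
  rcases le_total 0 x with h | h
  · rw [abs_of_nonneg h, max_eq_left h, max_eq_right (neg_nonpos.mpr h)]; ring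
  · rw [abs_of_nonpos h, max_eq_right h, max_eq_left (neg_nonneg.mpr h)]; ring

/-- forward direction work horse. -/
lemma forward {Ω : Type*} (P N : FinAddMeasure Ω) (f : Ω → ℝ)
    (hP : FAIntegrable P f) (hN : FAIntegrable N f) :
    FAIntegrable (famAdd P N) f ∧ FAIntegrable (famAdd P N) (fun ω => |f ω|) ∧
      |faInt P f - faInt N f| ≤ 2 * faInt (famAdd P N) (fun ω => |f ω|) := by
  obtain ⟨hPp, hPn⟩ := hP
  obtain ⟨hNp, hNn⟩ := hN
  have hPp : BddAbove (S P (fun ω => max (f ω) 0)) := hPp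
  have hPn : BddAbove (S P (fun ω => max (-(f ω)) 0)) := hPn
  have hNp : BddAbove (S N (fun ω => max (f ω) 0)) := hNp
  have hNn : BddAbove (S N (fun ω => max (-(f ω)) 0)) := hNn
  have hgp0 : ∀ ω, (0:ℝ) ≤ max (f ω) 0 := fun ω => le_max_right _ _
  have hgn0 : ∀ ω, (0:ℝ) ≤ max (-(f ω)) 0 := fun ω => le_max_right _ _
  set μ := famAdd P N with hμ
  have hμp : BddAbove (S μ (fun ω => max (f ω) 0)) := bddAbove_S_famAdd hPp hNp
  have hμn : BddAbove (S μ (fun ω => max (-(f ω)) 0)) := bddAbove_S_famAdd hPn hNn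
  have hμabs : BddAbove (S μ (fun ω => |f ω|)) := by
    refine ⟨I μ (fun ω => max (f ω) 0) + I μ (fun ω => max (-(f ω)) 0), fun r hr => ?_⟩
    exact split μ hgp0 hgn0 hμp hμn (fun ω => le_of_eq (abs_eq_pos_add_neg (f ω))) r hr
  have hint : FAIntegrable μ (fun ω => |f ω|) := by
    constructor
    · show BddAbove (S μ (fun ω => max (|f ω|) 0))
      rwa [S_congr (g2 := fun ω => |f ω|) (fun ω => max_eq_left (abs_nonneg _))]
    · show BddAbove (S μ (fun ω => max (-(|f ω|)) 0))
      refine bddAbove_S_of_dominated (nb := 0) (b := fun j => 0) (F := fun _ => (∅ : Set Ω))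
        (fun j => le_rfl) ?_
      intro ω
      simp [max_le_iff, abs_nonneg]
  refine ⟨⟨hμp, hμn⟩, hint, ?_⟩
  have hPμ : ∀ E, P.μ E ≤ μ.μ E := fun E => le_add_of_nonneg_right (N.nonneg E)
  have hNμ : ∀ E, N.μ E ≤ μ.μ E := fun E => le_add_of_nonneg_left (P.nonneg E)
  have hPabs := I_mono_m hPμ (fun ω => abs_nonneg _) hμabs
  have hNabs := I_mono_m hNμ (fun ω => abs_nonneg _) hμabs
  have hple : ∀ ω, max (f ω) 0 ≤ |f ω| := fun ω => max_le (le_abs_self _) (abs_nonneg _)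
  have hnle : ∀ ω, max (-(f ω)) 0 ≤ |f ω| := fun ω => max_le (neg_le_abs _) (abs_nonneg _)
  have h1 : I P (fun ω => max (f ω) 0) ≤ I μ (fun ω => |f ω|) :=
    (I_mono_g hple hgp0 hPabs.1).trans hPabs.2
  have h2 : I P (fun ω => max (-(f ω)) 0) ≤ I μ (fun ω => |f ω|) :=
    (I_mono_g hnle hgn0 hPabs.1).trans hPabs.2
  have h3 : I N (fun ω => max (f ω) 0) ≤ I μ (fun ω => |f ω|) :=
    (I_mono_g hple hgp0 hNabs.1).trans hNabs.2
  have h4 : I N (fun ω => max (-(f ω)) 0) ≤ I μ (fun ω => |f ω|) :=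
    (I_mono_g hnle hgn0 hNabs.1).trans hNabs.2
  have h5 : 0 ≤ I P (fun ω => max (f ω) 0) := I_nonneg hgp0 hPp
  have h6 : 0 ≤ I P (fun ω => max (-(f ω)) 0) := I_nonneg hgn0 hPn
  have h7 : 0 ≤ I N (fun ω => max (f ω) 0) := I_nonneg hgp0 hNp
  have h8 : 0 ≤ I N (fun ω => max (-(f ω)) 0) := I_nonneg hgn0 hNn
  rw [faInt_eq, faInt_eq, faInt_abs]
  rw [abs_le]
  constructor <;> linarith

/-- backward direction: Hahn-Banach. -/
theorem backward {Ω : Type*} (L : Set (Ω → ℝ))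
    (hLadd : ∀ f ∈ L, ∀ g ∈ L, f + g ∈ L)
    (hLsmul : ∀ (c : ℝ), ∀ f ∈ L, c • f ∈ L)
    (φ : (Ω → ℝ) → ℝ)
    (hφadd : ∀ f ∈ L, ∀ g ∈ L, φ (f + g) = φ f + φ g)
    (hφsmul : ∀ (c : ℝ), ∀ f ∈ L, φ (c • f) = c * φ f)
    (μ : FinAddMeasure Ω)
    (hint : ∀ f ∈ L, FAIntegrable μ f ∧ FAIntegrable μ (fun ω => |f ω|))
    (C : ℝ) (hC : 0 ≤ C) (hbound : ∀ f ∈ L, |φ f| ≤ C * faInt μ (fun ω => |f ω|)) :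
    ∃ lamP lamN : FinAddMeasure Ω, ∀ f ∈ L,
      FAIntegrable lamP f ∧ FAIntegrable lamN f ∧ φ f = faInt lamP f - faInt lamN f := by
  classical
  rcases L.eq_empty_or_nonempty with rfl | ⟨f₀, hf₀⟩
  · exact ⟨zeroFAM Ω, zeroFAM Ω, by simp⟩
  have h0L : (0 : Ω → ℝ) ∈ L := by
    have := hLsmul 0 f₀ hf₀
    rwa [zero_smul] at this
  have hLV : ∀ f ∈ L, f ∈ V μ := by
    intro f hf
    rw [mem_V_iff]
    have h1 := (hint f hf).2.1
    rwa [show S μ (fun ω => |f ω|) = S μ (fun ω => max (|f ω|) 0) from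
      S_congr (fun ω => (max_eq_left (abs_nonneg _)).symm)]
  let Lsub : Submodule ℝ (V μ) :=
    { carrier := {x | (x : Ω → ℝ) ∈ L}
      add_mem' := fun {x y} hx hy => by
        show ((x + y : V μ) : Ω → ℝ) ∈ L
        rw [Submodule.coe_add]
        exact hLadd _ hx _ hy
      zero_mem' := by
        show ((0 : V μ) : Ω → ℝ) ∈ L
        rw [Submodule.coe_zero]
        exact h0L
      smul_mem' := fun c {x} hx => by
        show ((c • x : V μ) : Ω → ℝ) ∈ L
        rw [Submodule.coe_smul]
        exact hLsmul c _ hx }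
  let φL : Lsub →ₗ[ℝ] ℝ :=
    { toFun := fun x => φ ((x : V μ) : Ω → ℝ)
      map_add' := fun x y => by
        have := hφadd _ x.2 _ y.2
        simpa using this
      map_smul' := fun c x => by
        have := hφsmul c _ x.2
        simpa using this }
  obtain ⟨ψ, hψeq, hψle⟩ := exists_extension_of_le_sublinear
    (⟨Lsub, φL⟩ : LinearPMap (RingHom.id ℝ) (V μ) ℝ)
    (fun x => C * I μ (fun ω => |(x : Ω → ℝ) ω|))
    (by
      intro c hc x
      have hcoe : ∀ ω, |((c • x : V μ) : Ω → ℝ) ω| = c * |(x : Ω → ℝ) ω| := by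
        intro ω
        rw [Submodule.coe_smul, Pi.smul_apply, smul_eq_mul, abs_mul, abs_of_pos hc]
      show C * I μ (fun ω => |((c • x : V μ) : Ω → ℝ) ω|)
          = c * (C * I μ (fun ω => |(x : Ω → ℝ) ω|))
      rw [I_congr hcoe, I_smul_g hc (fun ω => abs_nonneg _) ((mem_V_iff μ _).mp x.2)]
      ring)
    (by
      intro x y
      have hxB := (mem_V_iff μ _).mp x.2
      have hyB := (mem_V_iff μ _).mp y.2
      have hIs : I μ (fun ω => |((x + y : V μ) : Ω → ℝ) ω|)
          ≤ I μ (fun ω => |(x : Ω → ℝ) ω|) + I μ (fun ω => |(y : Ω → ℝ) ω|) := by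
        refine csSup_le (S_nonempty fun ω => abs_nonneg _) ?_
        intro r hr
        refine split μ (fun ω => abs_nonneg _) (fun ω => abs_nonneg _) hxB hyB ?_ r hr
        intro ω
        rw [Submodule.coe_add, Pi.add_apply]
        exact abs_add_le _ _
      calc C * I μ (fun ω => |((x + y : V μ) : Ω → ℝ) ω|)
          ≤ C * (I μ (fun ω => |(x : Ω → ℝ) ω|) + I μ (fun ω => |(y : Ω → ℝ) ω|)) :=
            mul_le_mul_of_nonneg_left hIs hC
        _ = _ := by ring)
    (by
      intro x
      have hx : ((x : V μ) : Ω → ℝ) ∈ L := x.2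
      have h1 := hbound _ hx
      rw [faInt_abs] at h1
      exact (le_abs_self _).trans h1)
  -- ψ bound in absolute value
  have hψabs : ∀ x : V μ, |ψ x| ≤ C * I μ (fun ω => |(x : Ω → ℝ) ω|) := by
    intro x
    rw [abs_le]
    refine ⟨?_, hψle x⟩
    have h1 := hψle (-x)
    rw [map_neg] at h1
    have h2 : I μ (fun ω => |((-x : V μ) : Ω → ℝ) ω|) = I μ (fun ω => |(x : Ω → ℝ) ω|) := by
      refine I_congr fun ω => ?_
      rw [Submodule.coe_neg, Pi.neg_apply, abs_neg]
    rw [h2] at h1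
    linarith
  -- the representing charge
  have hNind : ∀ E : Set Ω, I μ (fun ω => |((indV μ E : Ω → ℝ)) ω|) = μ.μ E := by
    intro E
    rw [I_congr (g2 := fun ω => E.indicator (fun _ => (1:ℝ)) ω) (fun ω => by
      rw [indV_coe]
      exact abs_of_nonneg (Set.indicator_nonneg (fun _ _ => zero_le_one) ω)),
      I_indicator]
  have hlamle : ∀ E : Set Ω, |ψ (indV μ E)| ≤ C * μ.μ E := by
    intro E
    have := hψabs (indV μ E)
    rwa [hNind E] at this
  have hind_empty : indV μ (∅ : Set Ω) = 0 := by
    apply Subtype.ext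
    rw [indV_coe]
    funext ω
    simp
  have hind_union : ∀ E F : Set Ω, Disjoint E F → indV μ (E ∪ F) = indV μ E + indV μ F := by
    intro E F h
    apply Subtype.ext
    rw [Submodule.coe_add, indV_coe, indV_coe, indV_coe]
    funext ω
    rw [Set.indicator_union_of_disjoint h]
    rfl
  let lamP : FinAddMeasure Ω :=
    { μ := fun E => (C * μ.μ E + ψ (indV μ E))/2
      nonneg := fun E => by
        have h := (abs_le.mp (hlamle E)).1
        show 0 ≤ (C * μ.μ E + ψ (indV μ E))/2
        linarith
      empty := by
        show (C * μ.μ ∅ + ψ (indV μ ∅))/2 = 0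
        rw [hind_empty, map_zero, μ.empty]
        ring
      add := fun E F h => by
        show (C * μ.μ (E ∪ F) + ψ (indV μ (E ∪ F)))/2 = _
        rw [hind_union E F h, map_add, μ.add E F h]
        ring }
  let lamN : FinAddMeasure Ω :=
    { μ := fun E => (C * μ.μ E - ψ (indV μ E))/2
      nonneg := fun E => by
        have h := (abs_le.mp (hlamle E)).2
        show 0 ≤ (C * μ.μ E - ψ (indV μ E))/2
        linarith
      empty := by
        show (C * μ.μ ∅ - ψ (indV μ ∅))/2 = 0
        rw [hind_empty, map_zero, μ.empty]
        ring
      add := fun E F h => by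
        show (C * μ.μ (E ∪ F) - ψ (indV μ (E ∪ F)))/2 = _
        rw [hind_union E F h, map_add, μ.add E F h]
        ring }
  refine ⟨lamP, lamN, ?_⟩
  intro f hf
  have hfV := hLV f hf
  have hfint := (hint f hf).1
  have hcore := core μ C hC ψ hψabs lamP lamN
    (fun E => by
      have := (abs_le.mp (hlamle E)).2
      show (C * μ.μ E + ψ (indV μ E))/2 ≤ C * μ.μ E
      linarith)
    (fun E => by
      have := (abs_le.mp (hlamle E)).1
      show (C * μ.μ E - ψ (indV μ E))/2 ≤ C * μ.μ E
      linarith)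
    (fun E => by
      show (C * μ.μ E + ψ (indV μ E))/2 - (C * μ.μ E - ψ (indV μ E))/2 = ψ (indV μ E)
      ring)
    f hfV hfint.1 hfint.2
  refine ⟨hcore.1, hcore.2.1, ?_⟩
  rw [← hcore.2.2]
  have := hψeq ⟨⟨f, hfV⟩, hf⟩
  exact this.symm

/-- moreover: positive representing measure. -/
theorem moreover {Ω : Type*} (L : Set (Ω → ℝ))
    (hLadd : ∀ f ∈ L, ∀ g ∈ L, f + g ∈ L)
    (hLsmul : ∀ (c : ℝ), ∀ f ∈ L, c • f ∈ L)
    (φ : (Ω → ℝ) → ℝ)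
    (hφadd : ∀ f ∈ L, ∀ g ∈ L, φ (f + g) = φ f + φ g)
    (hφsmul : ∀ (c : ℝ), ∀ f ∈ L, φ (c • f) = c * φ f)
    (hlat : ∀ f ∈ L, ∀ g ∈ L, (fun ω => max (f ω) (g ω)) ∈ L)
    (hpos : ∀ f ∈ L, (∀ ω, 0 ≤ f ω) → 0 ≤ φ f)
    (μ : FinAddMeasure Ω)
    (hint : ∀ f ∈ L, FAIntegrable μ f ∧ FAIntegrable μ (fun ω => |f ω|))
    (C : ℝ) (hC : 0 ≤ C) (hbound : ∀ f ∈ L, |φ f| ≤ C * faInt μ (fun ω => |f ω|)) :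
    ∃ m : FinAddMeasure Ω, ∀ f ∈ L, FAIntegrable m f ∧ φ f = faInt m f := by
  classical
  rcases L.eq_empty_or_nonempty with rfl | ⟨f₀, hf₀⟩
  · exact ⟨zeroFAM Ω, by simp⟩
  have h0L : (0 : Ω → ℝ) ∈ L := by
    have := hLsmul 0 f₀ hf₀
    rwa [zero_smul] at this
  have hLV : ∀ f ∈ L, f ∈ V μ := by
    intro f hf
    rw [mem_V_iff]
    have h1 := (hint f hf).2.1
    rwa [show S μ (fun ω => |f ω|) = S μ (fun ω => max (|f ω|) 0) from
      S_congr (fun ω => (max_eq_left (abs_nonneg _)).symm)]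
  have hposL : ∀ f ∈ L, (fun ω => max (f ω) 0) ∈ L := by
    intro f hf
    have h := hlat f hf 0 h0L
    have heq : (fun ω => max (f ω) ((0 : Ω → ℝ) ω)) = fun ω => max (f ω) 0 := by
      funext ω; simp
    rwa [heq] at h
  have hnegL : ∀ f ∈ L, (fun ω => max (-(f ω)) 0) ∈ L := by
    intro f hf
    have hneg : (-1 : ℝ) • f ∈ L := hLsmul (-1) f hf
    have h := hlat _ hneg 0 h0L
    have heq : (fun ω => max (((-1:ℝ) • f) ω) ((0 : Ω → ℝ) ω)) = fun ω => max (-(f ω)) 0 := by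
      funext ω; simp
    rwa [heq] at h
  let Lsub : Submodule ℝ (V μ) :=
    { carrier := {x | (x : Ω → ℝ) ∈ L}
      add_mem' := fun {x y} hx hy => by
        show ((x + y : V μ) : Ω → ℝ) ∈ L
        rw [Submodule.coe_add]
        exact hLadd _ hx _ hy
      zero_mem' := by
        show ((0 : V μ) : Ω → ℝ) ∈ L
        rw [Submodule.coe_zero]
        exact h0L
      smul_mem' := fun c {x} hx => by
        show ((c • x : V μ) : Ω → ℝ) ∈ L
        rw [Submodule.coe_smul]
        exact hLsmul c _ hx }
  let φL : Lsub →ₗ[ℝ] ℝ :=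
    { toFun := fun x => φ ((x : V μ) : Ω → ℝ)
      map_add' := fun x y => by
        have := hφadd _ x.2 _ y.2
        simpa using this
      map_smul' := fun c x => by
        have := hφsmul c _ x.2
        simpa using this }
  have hbpos : ∀ x : V μ, BddAbove (S μ (fun ω => max ((x : Ω → ℝ) ω) 0)) := fun x =>
    BddAbove.mono (S_mono_g (fun ω => max_le (le_abs_self _) (abs_nonneg _)))
      ((mem_V_iff μ _).mp x.2)
  obtain ⟨ψ, hψeq, hψle⟩ := exists_extension_of_le_sublinear
    (⟨Lsub, φL⟩ : LinearPMap (RingHom.id ℝ) (V μ) ℝ)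
    (fun x => C * I μ (fun ω => max ((x : Ω → ℝ) ω) 0))
    (by
      intro c hc x
      have hcoe : ∀ ω, max (((c • x : V μ) : Ω → ℝ) ω) 0 = c * max ((x : Ω → ℝ) ω) 0 := by
        intro ω
        rw [Submodule.coe_smul, Pi.smul_apply, smul_eq_mul, mul_max_of_nonneg _ _ hc.le,
          mul_zero]
      show C * I μ (fun ω => max (((c • x : V μ) : Ω → ℝ) ω) 0)
          = c * (C * I μ (fun ω => max ((x : Ω → ℝ) ω) 0))
      rw [I_congr hcoe, I_smul_g hc (fun ω => le_max_right _ _) (hbpos x)]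
      ring)
    (by
      intro x y
      have hIs : I μ (fun ω => max (((x + y : V μ) : Ω → ℝ) ω) 0)
          ≤ I μ (fun ω => max ((x : Ω → ℝ) ω) 0) + I μ (fun ω => max ((y : Ω → ℝ) ω) 0) := by
        refine csSup_le (S_nonempty fun ω => le_max_right _ _) ?_
        intro r hr
        refine split μ (fun ω => le_max_right _ _) (fun ω => le_max_right _ _)
          (hbpos x) (hbpos y) ?_ r hr
        intro ω
        rw [Submodule.coe_add, Pi.add_apply]
        exact max_le (add_le_add (le_max_left _ _) (le_max_left _ _))
          (add_nonneg (le_max_right _ _) (le_max_right _ _))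
      calc C * I μ (fun ω => max (((x + y : V μ) : Ω → ℝ) ω) 0)
          ≤ C * (I μ (fun ω => max ((x : Ω → ℝ) ω) 0) + I μ (fun ω => max ((y : Ω → ℝ) ω) 0)) :=
            mul_le_mul_of_nonneg_left hIs hC
        _ = _ := by ring)
    (by
      intro x
      have hx : ((x : V μ) : Ω → ℝ) ∈ L := x.2
      have hfpL := hposL _ hx
      have hfnL := hnegL _ hx
      have hadd : φ (fun ω => max (((x : V μ) : Ω → ℝ) ω) 0)
          = φ ((x : V μ) : Ω → ℝ) + φ (fun ω => max (-(((x : V μ) : Ω → ℝ) ω)) 0) := by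
        have heq : (fun ω => max (((x : V μ) : Ω → ℝ) ω) 0)
            = ((x : V μ) : Ω → ℝ) + (fun ω => max (-(((x : V μ) : Ω → ℝ) ω)) 0) := by
          funext ω
          simp only [Pi.add_apply]
          have := pos_sub_neg (((x : V μ) : Ω → ℝ) ω)
          linarith
        rw [heq]
        exact hφadd _ hx _ hfnL
      have h1 : 0 ≤ φ (fun ω => max (-(((x : V μ) : Ω → ℝ) ω)) 0) :=
        hpos _ hfnL (fun ω => le_max_right _ _)
      have h2 : φ (fun ω => max (((x : V μ) : Ω → ℝ) ω) 0)
          ≤ C * I μ (fun ω => max (((x : V μ) : Ω → ℝ) ω) 0) := by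
        have h3 := hbound _ hfpL
        rw [faInt_abs] at h3
        have h4 : I μ (fun ω => |max (((x : V μ) : Ω → ℝ) ω) 0|)
            = I μ (fun ω => max (((x : V μ) : Ω → ℝ) ω) 0) :=
          I_congr fun ω => abs_of_nonneg (le_max_right _ _)
        rw [h4] at h3
        exact (le_abs_self _).trans h3
      show φ ((x : V μ) : Ω → ℝ) ≤ C * I μ (fun ω => max (((x : V μ) : Ω → ℝ) ω) 0)
      linarith)
  -- positivity and bounds for ψ on indicators
  have hψind_le : ∀ E : Set Ω, ψ (indV μ E) ≤ C * μ.μ E := by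
    intro E
    have h := hψle (indV μ E)
    have heq : I μ (fun ω => max (((indV μ E : Ω → ℝ)) ω) 0) = μ.μ E := by
      rw [I_congr (g2 := fun ω => E.indicator (fun _ => (1:ℝ)) ω) (fun ω => by
        have hc := congrFun (indV_coe μ E) ω
        rw [hc]
        exact max_eq_left (Set.indicator_nonneg (fun _ _ => zero_le_one) ω)), I_indicator]
    rwa [heq] at h
  have hψind_nonneg : ∀ E : Set Ω, 0 ≤ ψ (indV μ E) := by
    intro E
    have h := hψle (-(indV μ E))
    rw [map_neg] at h
    have hzero : I μ (fun ω => max ((((-(indV μ E)) : V μ) : Ω → ℝ) ω) 0) = 0 := by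
      apply I_zero_of_nonpos
      · intro ω
        have hc : (((-(indV μ E)) : V μ) : Ω → ℝ) ω = -(E.indicator (fun _ => (1:ℝ)) ω) := by
          rw [Submodule.coe_neg, Pi.neg_apply, indV_coe]
        rw [hc]
        exact max_le (neg_nonpos.mpr (Set.indicator_nonneg (fun _ _ => zero_le_one) ω)) le_rfl
      · intro ω
        exact le_max_right _ _
    rw [hzero, mul_zero] at h
    linarith
  have hind_empty : indV μ (∅ : Set Ω) = 0 := by
    apply Subtype.ext
    rw [indV_coe]
    funext ω
    simp
  have hind_union : ∀ E F : Set Ω, Disjoint E F → indV μ (E ∪ F) = indV μ E + indV μ F := by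
    intro E F h
    apply Subtype.ext
    rw [Submodule.coe_add, indV_coe, indV_coe, indV_coe]
    funext ω
    rw [Set.indicator_union_of_disjoint h]
    rfl
  let m : FinAddMeasure Ω :=
    { μ := fun E => ψ (indV μ E)
      nonneg := hψind_nonneg
      empty := by
        show ψ (indV μ ∅) = 0
        rw [hind_empty, map_zero]
      add := fun E F h => by
        show ψ (indV μ (E ∪ F)) = _
        rw [hind_union E F h, map_add] }
  -- |ψ| bound
  have hψabs : ∀ x : V μ, |ψ x| ≤ C * I μ (fun ω => |(x : Ω → ℝ) ω|) := by
    intro x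
    have hb1 : I μ (fun ω => max ((x : Ω → ℝ) ω) 0) ≤ I μ (fun ω => |(x : Ω → ℝ) ω|) :=
      I_mono_g (fun ω => max_le (le_abs_self _) (abs_nonneg _)) (fun ω => le_max_right _ _)
        ((mem_V_iff μ _).mp x.2)
    have hb2 : I μ (fun ω => max (((-x : V μ) : Ω → ℝ) ω) 0) ≤ I μ (fun ω => |(x : Ω → ℝ) ω|) := by
      refine I_mono_g (fun ω => ?_) (fun ω => le_max_right _ _) ((mem_V_iff μ _).mp x.2)
      rw [Submodule.coe_neg, Pi.neg_apply]
      exact max_le (neg_le_abs _) (abs_nonneg _)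
    have h1 := hψle x
    have h2 := hψle (-x)
    rw [map_neg] at h2
    have h3 := mul_le_mul_of_nonneg_left hb1 hC
    have h4 := mul_le_mul_of_nonneg_left hb2 hC
    rw [abs_le]
    exact ⟨by linarith, by linarith⟩
  refine ⟨m, ?_⟩
  intro f hf
  have hfV := hLV f hf
  have hfint := (hint f hf).1
  have hcore := core μ C hC ψ hψabs m (zeroFAM Ω)
    (fun E => hψind_le E)
    (fun E => by
      show (0:ℝ) ≤ C * μ.μ E
      exact mul_nonneg hC (μ.nonneg E))
    (fun E => by
      show ψ (indV μ E) - 0 = ψ (indV μ E)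
      ring)
    f hfV hfint.1 hfint.2
  refine ⟨hcore.1, ?_⟩
  have h5 := hcore.2.2
  rw [faInt_zeroFAM, sub_zero] at h5
  rw [← h5]
  have := hψeq ⟨⟨f, hfV⟩, hf⟩
  exact this.symm

theorem representing_measure_iff_continuity' {Ω : Type*} [Nonempty Ω]
    (L : Set (Ω → ℝ))
    (hLadd : ∀ f ∈ L, ∀ g ∈ L, f + g ∈ L)
    (hLsmul : ∀ (c : ℝ), ∀ f ∈ L, c • f ∈ L)
    (φ : (Ω → ℝ) → ℝ)
    (hφadd : ∀ f ∈ L, ∀ g ∈ L, φ (f + g) = φ f + φ g)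
    (hφsmul : ∀ (c : ℝ), ∀ f ∈ L, φ (c • f) = c * φ f) :
    ((∃ lamP lamN : FinAddMeasure Ω, ∀ f ∈ L,
        FAIntegrable lamP f ∧ FAIntegrable lamN f ∧
        φ f = faInt lamP f - faInt lamN f) ↔
      (∃ μ : FinAddMeasure Ω,
        (∀ f ∈ L, FAIntegrable μ f ∧ FAIntegrable μ (fun ω => |f ω|)) ∧
        ∃ C : ℝ, 0 ≤ C ∧ ∀ f ∈ L, |φ f| ≤ C * faInt μ (fun ω => |f ω|))) ∧
    (((∀ f ∈ L, ∀ g ∈ L, (fun ω => max (f ω) (g ω)) ∈ L) ∧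
        (∀ f ∈ L, (∀ ω, 0 ≤ f ω) → 0 ≤ φ f)) →
      (∃ μ : FinAddMeasure Ω,
        (∀ f ∈ L, FAIntegrable μ f ∧ FAIntegrable μ (fun ω => |f ω|)) ∧
        ∃ C : ℝ, 0 ≤ C ∧ ∀ f ∈ L, |φ f| ≤ C * faInt μ (fun ω => |f ω|)) →
      ∃ m : FinAddMeasure Ω, ∀ f ∈ L, FAIntegrable m f ∧ φ f = faInt m f) := by
  constructor
  · constructor
    · rintro ⟨P, N, h⟩
      refine ⟨famAdd P N, ?_, 2, by norm_num, ?_⟩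
      · intro f hf
        obtain ⟨h1, h2, h3⟩ := h f hf
        obtain ⟨hi1, hi2, _⟩ := forward P N f h1 h2
        exact ⟨hi1, hi2⟩
      · intro f hf
        obtain ⟨h1, h2, h3⟩ := h f hf
        obtain ⟨_, _, hb⟩ := forward P N f h1 h2
        rw [h3]
        exact hb
    · rintro ⟨μ, hint, C, hC, hbound⟩
      exact backward L hLadd hLsmul φ hφadd hφsmul μ hint C hC hbound
  · rintro ⟨hlat, hpos⟩ ⟨μ, hint, C, hC, hbound⟩
    exact moreover L hLadd hLsmul φ hφadd hφsmul hlat hpos μ hint C hC hbound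

end Rep17

/-- a linear functional `φ` on a linear subspace `L ⊆ ℝ^Ω`
admits a representing measure `λ ∈ ba` (written as a difference `λ⁺ - λ⁻` of
positive finitely additive measures) iff there is `μ ∈ ba₊` with `L ⊆ L(μ)`
and `φ` continuous for the seminorm `f ↦ μ(|f|)`.  Moreover, if `L` is a
vector sublattice and `φ` is positive, the representing measure may be
chosen positive. -/
theorem representing_measure_iff_continuity {Ω : Type*} [Nonempty Ω]
    (L : Set (Ω → ℝ))
    (hLadd : ∀ f ∈ L, ∀ g ∈ L, f + g ∈ L)
    (hLsmul : ∀ (c : ℝ), ∀ f ∈ L, c • f ∈ L)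
    (φ : (Ω → ℝ) → ℝ)
    (hφadd : ∀ f ∈ L, ∀ g ∈ L, φ (f + g) = φ f + φ g)
    (hφsmul : ∀ (c : ℝ), ∀ f ∈ L, φ (c • f) = c * φ f) :
    ((∃ lamP lamN : FinAddMeasure Ω, ∀ f ∈ L,
        FAIntegrable lamP f ∧ FAIntegrable lamN f ∧
        φ f = faInt lamP f - faInt lamN f) ↔
      (∃ μ : FinAddMeasure Ω,
        (∀ f ∈ L, FAIntegrable μ f ∧ FAIntegrable μ (fun ω => |f ω|)) ∧
        ∃ C : ℝ, 0 ≤ C ∧ ∀ f ∈ L, |φ f| ≤ C * faInt μ (fun ω => |f ω|))) ∧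
    (((∀ f ∈ L, ∀ g ∈ L, (fun ω => max (f ω) (g ω)) ∈ L) ∧
        (∀ f ∈ L, (∀ ω, 0 ≤ f ω) → 0 ≤ φ f)) →
      (∃ μ : FinAddMeasure Ω,
        (∀ f ∈ L, FAIntegrable μ f ∧ FAIntegrable μ (fun ω => |f ω|)) ∧
        ∃ C : ℝ, 0 ≤ C ∧ ∀ f ∈ L, |φ f| ≤ C * faInt μ (fun ω => |f ω|)) →
      ∃ m : FinAddMeasure Ω, ∀ f ∈ L, FAIntegrable m f ∧ φ f = faInt m f) := by
  exact Rep17.representing_measure_iff_continuity' L hLadd hLsmul φ hφadd hφsmul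
end

section
/- Let m be a finitely additive probability on 2^Ω and define A = {E ⊆ Ω : inf{m(g) : g ∈ L, g ≥ 1_E} = sup{m(f) : f ∈ L, f ≤ 1_E}}, where L is a vector sublattice of L(m) containing 1 such that lim_n m(f_n) = 0 for every sequence in L decreasing pointwise to 0. Then for every decreasing sequence (E_n) in A with ⋂_n E_n = ∅ one has lim_n m(E_n) = 0; that is, m restricted to the algebra A is countably additive. -/
open Filter Set

section Aux
variable {Ω : Type*}

theorem FinAddMeasure.mono (m : FinAddMeasure Ω) {E F : Set Ω} (h : E ⊆ F) :
    m.μ E ≤ m.μ F := by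
  have hd : Disjoint E (F \ E) := disjoint_sdiff_right
  have := m.add E (F \ E) hd
  rw [Set.union_diff_cancel h] at this
  nlinarith [m.nonneg (F \ E)]

theorem FinAddMeasure.finadd (m : FinAddMeasure Ω) {ι : Type*} [DecidableEq ι]
    (s : Finset ι) (f : ι → Set Ω)
    (h : ∀ i ∈ s, ∀ j ∈ s, i ≠ j → Disjoint (f i) (f j)) :
    m.μ (⋃ i ∈ s, f i) = ∑ i ∈ s, m.μ (f i) := by
  induction s using Finset.induction_on with
  | empty => simp [m.empty]
  | insert _ _ hx ih =>
    rename_i a s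
    rw [Finset.sum_insert hx, Finset.set_biUnion_insert, ← ih (fun i hi j hj hij =>
      h i (Finset.mem_insert_of_mem hi) j (Finset.mem_insert_of_mem hj) hij)]
    refine m.add _ _ ?_
    refine Set.disjoint_iUnion_right.2 (fun i => Set.disjoint_iUnion_right.2 (fun hi => ?_))
    exact h a (Finset.mem_insert_self a s) i (Finset.mem_insert_of_mem hi)
      (fun hne => hx (hne ▸ hi))

theorem zero_mem_lowerSums (A : Set (Set Ω)) (μ : Set Ω → ℝ) (f : Ω → ℝ)
    (hf : ∀ ω, 0 ≤ f ω) : (0:ℝ) ∈ lowerSums A μ f := by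
  refine ⟨0, Fin.elim0, Fin.elim0, ?_, ?_, ?_, ?_⟩ <;> simp [hf]

theorem lowerSums_mono (A : Set (Set Ω)) (μ : Set Ω → ℝ) {f g : Ω → ℝ}
    (h : ∀ ω, f ω ≤ g ω) : lowerSums A μ f ⊆ lowerSums A μ g := by
  rintro r ⟨n, a, E, ha, hE, hb, rfl⟩
  exact ⟨n, a, E, ha, hE, fun ω => (hb ω).trans (h ω), rfl⟩

theorem lowerSums_zero {μ : Set Ω → ℝ} (hnn : ∀ E, 0 ≤ μ E) (hemp : μ ∅ = 0)
    (A : Set (Set Ω)) : lowerSums A μ (fun _ => (0:ℝ)) = {0} := by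
  ext r
  simp only [Set.mem_singleton_iff]
  constructor
  · rintro ⟨n, a, E, ha, hE, hb, rfl⟩
    refine Finset.sum_eq_zero (fun i _ => ?_)
    rcases Set.eq_empty_or_nonempty (E i) with h | ⟨ω, hω⟩
    · simp [h, hemp]
    · have h0 : ∀ j ∈ Finset.univ, (0:ℝ) ≤ a j * (E j).indicator (fun _ => (1:ℝ)) ω :=
        fun j _ => mul_nonneg (ha j) (Set.indicator_nonneg (by simp) ω)
      have := (Finset.sum_eq_zero_iff_of_nonneg h0).1
        (le_antisymm (hb ω) (Finset.sum_nonneg h0)) i (Finset.mem_univ i)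
      rw [Set.indicator_of_mem hω] at this
      simp only [mul_one] at this
      simp [this]
  · rintro rfl
    exact zero_mem_lowerSums A μ _ (fun _ => le_refl 0)

theorem faInt_nonneg_eq (m : FinAddMeasure Ω) (f : Ω → ℝ) (hf : ∀ ω, 0 ≤ f ω) :
    faInt m f = sSup (lowerSums Set.univ m.μ f) := by
  have h1 : (fun ω => max (f ω) 0) = f := funext fun ω => max_eq_left (hf ω)
  have h2 : (fun ω => max (-(f ω)) 0) = fun _ => (0:ℝ) :=
    funext fun ω => max_eq_right (neg_nonpos.2 (hf ω))
  rw [faInt, faIntOn, h1, h2, lowerSums_zero m.nonneg m.empty, csSup_singleton, sub_zero]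

theorem measure_mem_lowerSums (m : FinAddMeasure Ω) (g : Ω → ℝ) (E : Set Ω)
    (h : ∀ ω, E.indicator (fun _ => (1:ℝ)) ω ≤ g ω) :
    m.μ E ∈ lowerSums Set.univ m.μ g := by
  refine ⟨1, fun _ => 1, fun _ => E, fun _ => zero_le_one, fun _ => Set.mem_univ _,
    fun ω => ?_, by simp⟩
  simpa using h ω

theorem faInt_mono_nonneg (m : FinAddMeasure Ω) {f g : Ω → ℝ}
    (hf : ∀ ω, 0 ≤ f ω) (hg : ∀ ω, 0 ≤ g ω) (hfg : ∀ ω, f ω ≤ g ω)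
    (hgint : FAIntegrable m g) : faInt m f ≤ faInt m g := by
  rw [faInt_nonneg_eq m f hf, faInt_nonneg_eq m g hg]
  have hbdd : BddAbove (lowerSums Set.univ m.μ g) := by
    have := hgint.1
    rwa [show (fun ω => max (g ω) 0) = g from funext fun ω => max_eq_left (hg ω)] at this
  exact csSup_le_csSup hbdd ⟨0, zero_mem_lowerSums _ _ _ hf⟩ (lowerSums_mono _ _ hfg)

theorem measure_le_faInt (m : FinAddMeasure Ω) (g : Ω → ℝ) (E : Set Ω)
    (h : ∀ ω, E.indicator (fun _ => (1:ℝ)) ω ≤ g ω) (hint : FAIntegrable m g) :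
    m.μ E ≤ faInt m g := by
  have hg : ∀ ω, 0 ≤ g ω := fun ω =>
    (Set.indicator_nonneg (fun _ _ => zero_le_one) ω).trans (h ω)
  rw [faInt_nonneg_eq m g hg]
  have hbdd : BddAbove (lowerSums Set.univ m.μ g) := by
    have := hint.1
    rwa [show (fun ω => max (g ω) 0) = g from funext fun ω => max_eq_left (hg ω)] at this
  exact le_csSup hbdd (measure_mem_lowerSums m g E h)

theorem faInt_le_posPart (m : FinAddMeasure Ω) (f : Ω → ℝ) (hint : FAIntegrable m f) :
    faInt m f ≤ faInt m (fun ω => max (f ω) 0) := by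
  rw [faInt_nonneg_eq m _ (fun ω => le_max_right _ _)]
  rw [faInt, faIntOn]
  have h0 : (0:ℝ) ≤ sSup (lowerSums Set.univ m.μ (fun ω => max (-(f ω)) 0)) :=
    le_csSup hint.2 (zero_mem_lowerSums _ _ _ (fun ω => le_max_right _ _))
  linarith

end Aux

section Aux2
variable {Ω : Type*}

theorem lowerSums_add_mem (μ : Set Ω → ℝ) {u v : Ω → ℝ} {r s : ℝ}
    (hr : r ∈ lowerSums Set.univ μ u) (hs : s ∈ lowerSums Set.univ μ v) :
    r + s ∈ lowerSums Set.univ μ (fun ω => u ω + v ω) := by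
  obtain ⟨n, a, E, ha, -, hb, rfl⟩ := hr
  obtain ⟨p, b, F, hb', -, hb2, rfl⟩ := hs
  refine ⟨n + p, Fin.append a b, Fin.append E F, ?_, fun _ => Set.mem_univ _, ?_, ?_⟩
  · intro i
    rcases Nat.lt_or_ge i.val n with h | h
    · have : i = Fin.castAdd p ⟨i.val, h⟩ := by ext; simp
      rw [this, Fin.append_left]; exact ha _
    · have : i = Fin.natAdd n ⟨i.val - n, by omega⟩ := by ext; simp; omega
      rw [this, Fin.append_right]; exact hb' _
  · intro ω
    rw [Fin.sum_univ_add]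
    simp only [Fin.append_left, Fin.append_right]
    exact add_le_add (hb ω) (hb2 ω)
  · rw [Fin.sum_univ_add]
    simp only [Fin.append_left, Fin.append_right]

theorem sSup_lowerSums_superadd (μ : Set Ω → ℝ) {u v : Ω → ℝ}
    (hu : ∀ ω, 0 ≤ u ω) (hv : ∀ ω, 0 ≤ v ω)
    (hbdd : BddAbove (lowerSums Set.univ μ (fun ω => u ω + v ω))) :
    sSup (lowerSums Set.univ μ u) + sSup (lowerSums Set.univ μ v) ≤
      sSup (lowerSums Set.univ μ (fun ω => u ω + v ω)) := by
  have hne_u : (lowerSums Set.univ μ u).Nonempty := ⟨0, zero_mem_lowerSums _ _ _ hu⟩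
  have hne_v : (lowerSums Set.univ μ v).Nonempty := ⟨0, zero_mem_lowerSums _ _ _ hv⟩
  rw [← le_sub_iff_add_le]
  refine csSup_le hne_u (fun r hr => ?_)
  rw [le_sub_iff_add_le, ← le_sub_iff_add_le']
  refine csSup_le hne_v (fun s hs => ?_)
  rw [le_sub_iff_add_le']
  exact le_csSup hbdd (lowerSums_add_mem μ hr hs)

end Aux2

section Aux3
variable {Ω : Type*}

def atomOf {n : ℕ} (E : Fin n → Set Ω) (T : Finset (Fin n)) : Set Ω :=
  {ω | ∀ i, ω ∈ E i ↔ i ∈ T}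

theorem atomOf_disjoint {n : ℕ} (E : Fin n → Set Ω) {T T' : Finset (Fin n)} (h : T ≠ T') :
    Disjoint (atomOf E T) (atomOf E T') := by
  rw [Set.disjoint_left]
  intro ω hω hω'
  exact h (Finset.ext fun i => (hω i).symm.trans (hω' i))

theorem mem_atomOf_iff {n : ℕ} (E : Fin n → Set Ω) (T : Finset (Fin n)) (ω : Ω) :
    ω ∈ atomOf E T ↔ ∀ i, ω ∈ E i ↔ i ∈ T := Iff.rfl

theorem mem_atomOf_self {n : ℕ} (E : Fin n → Set Ω) [∀ i ω, Decidable (ω ∈ E i)] (ω : Ω) :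
    ω ∈ atomOf E (Finset.univ.filter (fun i => ω ∈ E i)) := by
  intro i; simp

theorem atomOf_eq_of_mem {n : ℕ} {E : Fin n → Set Ω} {T T' : Finset (Fin n)} {ω : Ω}
    (h : ω ∈ atomOf E T) (h' : ω ∈ atomOf E T') : T = T' :=
  Finset.ext fun i => (h i).symm.trans (h' i)

theorem E_eq_union_atoms {n : ℕ} (E : Fin n → Set Ω) (j : Fin n) :
    E j = ⋃ T ∈ Finset.univ.filter (fun T : Finset (Fin n) => j ∈ T), atomOf E T := by
  classical
  ext ω
  simp only [Set.mem_iUnion, Finset.mem_filter, Finset.mem_univ, true_and]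
  constructor
  · intro h
    exact ⟨Finset.univ.filter (fun i => ω ∈ E i), by simp [h], mem_atomOf_self E ω⟩
  · rintro ⟨T, hj, hω⟩
    exact (hω j).2 hj

theorem atomization (m : FinAddMeasure Ω) {n : ℕ} (a : Fin n → ℝ) (E : Fin n → Set Ω) :
    ∑ i, a i * m.μ (E i) =
      ∑ T : Finset (Fin n), (∑ i ∈ T, a i) * m.μ (atomOf E T) := by
  classical
  have key : ∀ j, m.μ (E j) =
      ∑ T : Finset (Fin n), if j ∈ T then m.μ (atomOf E T) else 0 := by
    intro j
    rw [E_eq_union_atoms E j,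
      m.finadd _ _ (fun T _ T' _ h => atomOf_disjoint E h), Finset.sum_filter]
  calc ∑ i, a i * m.μ (E i)
      = ∑ i, ∑ T : Finset (Fin n), a i * (if i ∈ T then m.μ (atomOf E T) else 0) := by
        simp_rw [key, Finset.mul_sum]
    _ = ∑ T : Finset (Fin n), ∑ i, a i * (if i ∈ T then m.μ (atomOf E T) else 0) :=
        Finset.sum_comm
    _ = ∑ T : Finset (Fin n), (∑ i ∈ T, a i) * m.μ (atomOf E T) := by
        refine Finset.sum_congr rfl (fun T _ => ?_)
        simp_rw [mul_ite, mul_zero, ← Finset.sum_filter, Finset.filter_mem_eq_inter,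
          Finset.univ_inter, Finset.sum_mul]

theorem sum_ind_eq {n : ℕ} (a : Fin n → ℝ) (E : Fin n → Set Ω)
    [∀ i ω, Decidable (ω ∈ E i)] (ω : Ω) :
    ∑ i, a i * (E i).indicator (fun _ => (1:ℝ)) ω =
      ∑ i ∈ Finset.univ.filter (fun i => ω ∈ E i), a i := by
  rw [Finset.sum_filter]
  refine Finset.sum_congr rfl (fun i _ => ?_)
  by_cases h : ω ∈ E i <;> simp [Set.indicator_apply, h]

end Aux3

section Aux4
variable {Ω : Type*}

theorem sSup_lowerSums_subadd (m : FinAddMeasure Ω) (htot : m.μ Set.univ = 1)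
    {u v : Ω → ℝ} {M : ℝ} (hM : 0 ≤ M)
    (hu0 : ∀ ω, 0 ≤ u ω) (huM : ∀ ω, u ω ≤ M) (hv0 : ∀ ω, 0 ≤ v ω)
    (hbu : BddAbove (lowerSums Set.univ m.μ u))
    (hbv : BddAbove (lowerSums Set.univ m.μ v)) :
    sSup (lowerSums Set.univ m.μ (fun ω => u ω + v ω)) ≤
      sSup (lowerSums Set.univ m.μ u) + sSup (lowerSums Set.univ m.μ v) := by
  classical
  refine csSup_le ⟨0, zero_mem_lowerSums _ _ _ (fun ω => add_nonneg (hu0 ω) (hv0 ω))⟩ ?_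
  rintro r hr
  refine le_of_forall_pos_le_add (fun δ hδ => ?_)
  obtain ⟨n, a, E, ha, -, hb, rfl⟩ := hr
  set K := ⌈M / δ⌉₊ with hK
  set c : Finset (Fin n) → ℝ := fun T => ∑ i ∈ T, a i with hc
  have hc0 : ∀ T, 0 ≤ c T := fun T => Finset.sum_nonneg (fun i _ => ha i)
  set B : Finset (Fin n) × Fin (K+1) → Set Ω :=
    fun p => atomOf E p.1 ∩
      {ω | ((p.2 : ℕ) : ℝ) * δ ≤ u ω ∧ u ω < (((p.2 : ℕ) : ℝ) + 1) * δ} with hB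
  have hkK : ∀ ω : Ω, ⌊u ω / δ⌋₊ < K + 1 := by
    intro ω
    have h1 : u ω / δ ≤ M / δ := by gcongr; exact huM ω
    exact Nat.lt_succ_of_le ((Nat.floor_mono h1).trans (Nat.floor_le_ceil _))
  set pOf : Ω → Finset (Fin n) × Fin (K+1) :=
    fun ω => (Finset.univ.filter (fun i => ω ∈ E i), ⟨⌊u ω / δ⌋₊, hkK ω⟩) with hpOf
  have mem_B_pOf : ∀ ω, ω ∈ B (pOf ω) := by
    intro ω
    refine ⟨mem_atomOf_self E ω, ?_, ?_⟩
    · exact (le_div_iff₀ hδ).1 (Nat.floor_le (div_nonneg (hu0 ω) hδ.le))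
    · have := Nat.lt_floor_add_one (u ω / δ)
      rw [div_lt_iff₀ hδ] at this
      exact_mod_cast this
  have eq_pOf_of_mem : ∀ {p ω}, ω ∈ B p → p = pOf ω := by
    rintro ⟨T, k⟩ ω ⟨hatom, hk1, hk2⟩
    have hT : T = (pOf ω).1 := atomOf_eq_of_mem hatom (mem_atomOf_self E ω)
    have hk : (k : ℕ) = ⌊u ω / δ⌋₊ := by
      symm
      rw [Nat.floor_eq_iff (div_nonneg (hu0 ω) hδ.le)]
      exact ⟨(le_div_iff₀ hδ).2 hk1, by rw [div_lt_iff₀ hδ]; exact_mod_cast hk2⟩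
    exact Prod.ext hT (Fin.ext hk)
  have hdisjB : ∀ p q : Finset (Fin n) × Fin (K+1), p ≠ q → Disjoint (B p) (B q) := by
    intro p q hpq
    rw [Set.disjoint_left]
    intro ω hp hq
    exact hpq ((eq_pOf_of_mem hp).trans (eq_pOf_of_mem hq).symm)
  have hsum1 : ∑ p : Finset (Fin n) × Fin (K+1), m.μ (B p) = 1 := by
    have hcover : (⋃ p ∈ (Finset.univ : Finset (Finset (Fin n) × Fin (K+1))), B p) = Set.univ := by
      ext ω
      simp only [Set.mem_iUnion, Finset.mem_univ, Set.mem_univ, iff_true, exists_const]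
      exact ⟨pOf ω, mem_B_pOf ω⟩
    have := m.finadd Finset.univ B (fun p _ q _ h => hdisjB p q h)
    rw [hcover, htot] at this
    exact this.symm
  have hatomsum : ∀ T, m.μ (atomOf E T) = ∑ k : Fin (K+1), m.μ (B (T, k)) := by
    intro T
    have hu : atomOf E T = ⋃ k ∈ (Finset.univ : Finset (Fin (K+1))), B (T, k) := by
      ext ω
      simp only [Set.mem_iUnion, Finset.mem_univ, exists_const]
      constructor
      · intro h
        have hT : T = (pOf ω).1 := atomOf_eq_of_mem h (mem_atomOf_self E ω)
        refine ⟨(pOf ω).2, ?_⟩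
        rw [show (T, (pOf ω).2) = pOf ω from by rw [hT]]
        exact mem_B_pOf ω
      · rintro ⟨k, hk⟩
        exact hk.1
    rw [hu, m.finadd Finset.univ (fun k => B (T, k))
      (fun i _ j _ hij => hdisjB _ _ (fun h => hij (congrArg Prod.snd h)))]
  have hrw : ∑ i, a i * m.μ (E i) = ∑ p : Finset (Fin n) × Fin (K+1), c p.1 * m.μ (B p) := by
    rw [atomization m a E, Fintype.sum_prod_type]
    refine Finset.sum_congr rfl (fun T _ => ?_)
    rw [hatomsum T, Finset.mul_sum]
  set cu : Finset (Fin n) × Fin (K+1) → ℝ :=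
    fun p => min (((p.2 : ℕ) : ℝ) * δ) (c p.1) with hcu
  set cv : Finset (Fin n) × Fin (K+1) → ℝ :=
    fun p => max (c p.1 - (((p.2 : ℕ) : ℝ) * δ + δ)) 0 with hcv
  have hcu0 : ∀ p, 0 ≤ cu p := fun p => le_min (by positivity) (hc0 _)
  have hcv0 : ∀ p, 0 ≤ cv p := fun p => le_max_right _ _
  have hsingle : ∀ (w : Finset (Fin n) × Fin (K+1) → ℝ) (ω : Ω),
      ∑ p, w p * (B p).indicator (fun _ => (1:ℝ)) ω = w (pOf ω) := by
    intro w ω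
    rw [Finset.sum_eq_single (pOf ω)
      (fun q _ hq => by
        rw [Set.indicator_of_notMem (fun hmem => hq (eq_pOf_of_mem hmem)), mul_zero])
      (fun h => absurd (Finset.mem_univ _) h),
      Set.indicator_of_mem (mem_B_pOf ω), mul_one]
  have hcofω : ∀ ω, c (pOf ω).1 = ∑ i, a i * (E i).indicator (fun _ => (1:ℝ)) ω := by
    intro ω
    rw [sum_ind_eq a E ω]
  have hcuu : ∀ ω, cu (pOf ω) ≤ u ω := fun ω => (min_le_left _ _).trans (mem_B_pOf ω).2.1
  have hcvv : ∀ ω, cv (pOf ω) ≤ v ω := by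
    intro ω
    refine max_le ?_ (hv0 ω)
    have h1 : c (pOf ω).1 ≤ u ω + v ω := by rw [hcofω ω]; exact hb ω
    have h2 : u ω < ((((pOf ω).2 : ℕ) : ℝ) + 1) * δ := (mem_B_pOf ω).2.2
    nlinarith
  have hmem : ∀ (w : Finset (Fin n) × Fin (K+1) → ℝ) (u' : Ω → ℝ), (∀ p, 0 ≤ w p) →
      (∀ ω, w (pOf ω) ≤ u' ω) → (∑ p, w p * m.μ (B p)) ∈ lowerSums Set.univ m.μ u' := by
    intro w u' hw hwu
    refine ⟨Fintype.card (Finset (Fin n) × Fin (K+1)),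
      fun j => w ((Fintype.equivFin _).symm j),
      fun j => B ((Fintype.equivFin _).symm j), fun j => hw _, fun _ => Set.mem_univ _, ?_, ?_⟩
    · intro ω
      rw [Equiv.sum_comp (Fintype.equivFin _).symm
        (fun p => w p * (B p).indicator (fun _ => (1:ℝ)) ω), hsingle w ω]
      exact hwu ω
    · rw [Equiv.sum_comp (Fintype.equivFin _).symm (fun p => w p * m.μ (B p))]
  have hSu : ∑ p, cu p * m.μ (B p) ≤ sSup (lowerSums Set.univ m.μ u) :=
    le_csSup hbu (hmem cu u hcu0 hcuu)
  have hSv : ∑ p, cv p * m.μ (B p) ≤ sSup (lowerSums Set.univ m.μ v) :=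
    le_csSup hbv (hmem cv v hcv0 hcvv)
  rw [hrw]
  have hperterm : ∀ p : Finset (Fin n) × Fin (K+1),
      c p.1 * m.μ (B p) ≤ (cu p + cv p + δ) * m.μ (B p) := by
    intro p
    refine mul_le_mul_of_nonneg_right ?_ (m.nonneg _)
    rcases le_total (c p.1) (((p.2 : ℕ) : ℝ) * δ) with h | h
    · have : cu p = c p.1 := min_eq_right h
      have h2 := hcv0 p
      linarith
    · have h1 : cu p = ((p.2 : ℕ) : ℝ) * δ := min_eq_left h
      have h2 : c p.1 - (((p.2 : ℕ) : ℝ) * δ + δ) ≤ cv p := le_max_left _ _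
      linarith
  calc ∑ p : Finset (Fin n) × Fin (K+1), c p.1 * m.μ (B p)
      ≤ ∑ p : Finset (Fin n) × Fin (K+1), (cu p + cv p + δ) * m.μ (B p) :=
        Finset.sum_le_sum (fun p _ => hperterm p)
    _ = (∑ p, cu p * m.μ (B p)) + (∑ p, cv p * m.μ (B p)) +
        δ * ∑ p : Finset (Fin n) × Fin (K+1), m.μ (B p) := by
        simp only [add_mul]
        rw [Finset.sum_add_distrib, Finset.sum_add_distrib, ← Finset.mul_sum]
    _ ≤ sSup (lowerSums Set.univ m.μ u) + sSup (lowerSums Set.univ m.μ v) + δ := by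
        rw [hsum1, mul_one]
        exact add_le_add (add_le_add hSu hSv) le_rfl

end Aux4

section Aux5
variable {Ω : Type*}

theorem bddAbove_lower_of_int (m : FinAddMeasure Ω) {u : Ω → ℝ} (hu : ∀ ω, 0 ≤ u ω)
    (h : FAIntegrable m u) : BddAbove (lowerSums Set.univ m.μ u) := by
  have := h.1
  rwa [show (fun ω => max (u ω) 0) = u from funext fun ω => max_eq_left (hu ω)] at this

theorem faInt_superadd (m : FinAddMeasure Ω) {u v : Ω → ℝ}
    (hu : ∀ ω, 0 ≤ u ω) (hv : ∀ ω, 0 ≤ v ω)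
    (hint : FAIntegrable m (fun ω => u ω + v ω)) :
    faInt m u + faInt m v ≤ faInt m (fun ω => u ω + v ω) := by
  rw [faInt_nonneg_eq m u hu, faInt_nonneg_eq m v hv,
    faInt_nonneg_eq m _ (fun ω => add_nonneg (hu ω) (hv ω))]
  exact sSup_lowerSums_superadd m.μ hu hv
    (bddAbove_lower_of_int m (fun ω => add_nonneg (hu ω) (hv ω)) hint)

theorem faInt_subadd (m : FinAddMeasure Ω) (htot : m.μ Set.univ = 1) {u v : Ω → ℝ}
    (hu0 : ∀ ω, 0 ≤ u ω) (hu1 : ∀ ω, u ω ≤ 1) (hv0 : ∀ ω, 0 ≤ v ω)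
    (hintu : FAIntegrable m u) (hintv : FAIntegrable m v) :
    faInt m (fun ω => u ω + v ω) ≤ faInt m u + faInt m v := by
  rw [faInt_nonneg_eq m u hu0, faInt_nonneg_eq m v hv0,
    faInt_nonneg_eq m _ (fun ω => add_nonneg (hu0 ω) (hv0 ω))]
  exact sSup_lowerSums_subadd m htot zero_le_one hu0 hu1 hv0
    (bddAbove_lower_of_int m hu0 hintu) (bddAbove_lower_of_int m hv0 hintv)

end Aux5


/-- with `m` a finitely additive probability on `2^Ω` and `L` a
vector sublattice of `L(m)` containing `1` such that `m(f_n) → 0` along every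
sequence in `L` decreasing pointwise to `0`, the family
`A = {E : inf{m(g) : g ∈ L, g ≥ 1_E} = sup{m(f) : f ∈ L, f ≤ 1_E}}` satisfies:
for every decreasing sequence `(E_n)` in `A` with empty intersection,
`m(E_n) → 0`; i.e. `m` restricted to `A` is countably additive. -/
theorem restriction_countably_additive {Ω : Type*} [Nonempty Ω]
    (m : FinAddProb Ω)
    (L : Set (Ω → ℝ))
    (hLint : ∀ f ∈ L, FAIntegrable m.toFinAddMeasure f)
    (hLadd : ∀ f ∈ L, ∀ g ∈ L, f + g ∈ L)
    (hLsmul : ∀ (c : ℝ), ∀ f ∈ L, c • f ∈ L)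
    (hLsup : ∀ f ∈ L, ∀ g ∈ L, (fun ω => max (f ω) (g ω)) ∈ L)
    (h1 : (fun _ => (1 : ℝ)) ∈ L)
    (hdaniell : ∀ fs : ℕ → Ω → ℝ, (∀ n, fs n ∈ L) →
        (∀ n ω, fs (n + 1) ω ≤ fs n ω) →
        (∀ ω, Filter.Tendsto (fun n => fs n ω) Filter.atTop (nhds 0)) →
        Filter.Tendsto (fun n => faInt m.toFinAddMeasure (fs n))
          Filter.atTop (nhds 0)) :
    ∀ E : ℕ → Set Ω,
      (∀ n, E n ∈ {E : Set Ω |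
        sInf {r : ℝ | ∃ g ∈ L, (∀ ω, E.indicator (fun _ => (1 : ℝ)) ω ≤ g ω) ∧
            r = faInt m.toFinAddMeasure g} =
        sSup {r : ℝ | ∃ f ∈ L, (∀ ω, f ω ≤ E.indicator (fun _ => (1 : ℝ)) ω) ∧
            r = faInt m.toFinAddMeasure f}}) →
      (∀ n, E (n + 1) ⊆ E n) → (⋂ n, E n) = ∅ →
      Filter.Tendsto (fun n => m.μ (E n)) Filter.atTop (nhds 0) := by
  intro E hEA hEdec hEempty
  set m' := m.toFinAddMeasure with hm'
  -- L is closed under negation and min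
  have h0L : (fun _ : Ω => (0:ℝ)) ∈ L := by
    have := hLsmul 0 _ h1
    convert this using 1
    funext ω
    simp
  have hnegL : ∀ h ∈ L, (fun ω => -(h ω)) ∈ L := by
    intro h hh
    have := hLsmul (-1) h hh
    convert this using 1
    funext ω
    simp
  have hminL : ∀ f ∈ L, ∀ g ∈ L, (fun ω => min (f ω) (g ω)) ∈ L := by
    intro f hf g hg
    have := hnegL _ (hLsup _ (hnegL f hf) _ (hnegL g hg))
    convert this using 1
    funext ω
    simp [max_neg_neg]
  have hind0 : ∀ (S : Set Ω) (ω : Ω), 0 ≤ S.indicator (fun _ => (1:ℝ)) ω := fun S ω =>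
    Set.indicator_nonneg (fun _ _ => zero_le_one) ω
  have hind1 : ∀ (S : Set Ω) (ω : Ω), S.indicator (fun _ => (1:ℝ)) ω ≤ 1 := by
    intro S ω
    by_cases h : ω ∈ S <;> simp [Set.indicator_apply, h]
  rw [Metric.tendsto_atTop]
  intro ε hε
  set η := ε / 2 with hη
  have hη0 : 0 < η := by positivity
  -- choose approximating functions
  have hchoice : ∀ n : ℕ, ∃ f g : Ω → ℝ, f ∈ L ∧ g ∈ L ∧ (∀ ω, 0 ≤ f ω) ∧
      (∀ ω, f ω ≤ (E n).indicator (fun _ => (1:ℝ)) ω) ∧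
      (∀ ω, (E n).indicator (fun _ => (1:ℝ)) ω ≤ g ω) ∧ (∀ ω, g ω ≤ 1) ∧
      faInt m' g < faInt m' f + η / 2 ^ (n + 1) := by
    intro n
    have hA := hEA n
    simp only [Set.mem_setOf_eq] at hA
    set Sg := {r : ℝ | ∃ g ∈ L, (∀ ω, (E n).indicator (fun _ => (1:ℝ)) ω ≤ g ω) ∧
        r = faInt m' g} with hSg
    set Sf := {r : ℝ | ∃ f ∈ L, (∀ ω, f ω ≤ (E n).indicator (fun _ => (1:ℝ)) ω) ∧
        r = faInt m' f} with hSf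
    have hSgne : Sg.Nonempty :=
      ⟨faInt m' (fun _ => 1), fun _ => 1, h1,
        fun ω => hind1 _ ω, rfl⟩
    have hSfne : Sf.Nonempty :=
      ⟨faInt m' (fun _ => 0), fun _ => 0, h0L,
        fun ω => hind0 _ ω, rfl⟩
    set ε' := η / 2 ^ (n + 1) / 2 with hε'
    have hε'0 : 0 < ε' := by positivity
    have hg_ex : ∃ x ∈ Sg, x < sInf Sg + ε' := by
      by_contra hcon
      push_neg at hcon
      have := le_csInf hSgne hcon
      linarith
    have hf_ex : ∃ y ∈ Sf, sSup Sf - ε' < y := by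
      by_contra hcon
      push_neg at hcon
      have := csSup_le hSfne hcon
      linarith
    obtain ⟨x, ⟨g₀, hg₀L, hg₀ge, rfl⟩, hx⟩ := hg_ex
    obtain ⟨y, ⟨f₀, hf₀L, hf₀le, rfl⟩, hy⟩ := hf_ex
    have hgap : faInt m' g₀ < faInt m' f₀ + η / 2 ^ (n + 1) := by
      rw [hA] at hx
      have : ε' + ε' = η / 2 ^ (n + 1) := by rw [hε']; ring
      linarith
    refine ⟨fun ω => max (f₀ ω) 0, fun ω => min (g₀ ω) 1, ?_, ?_, ?_, ?_, ?_, ?_, ?_⟩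
    · exact hLsup _ hf₀L _ h0L
    · exact hminL _ hg₀L _ h1
    · exact fun ω => le_max_right _ _
    · exact fun ω => max_le (hf₀le ω) (hind0 _ ω)
    · exact fun ω => le_min (hg₀ge ω) (hind1 _ ω)
    · exact fun ω => min_le_right _ _
    · have h1' : faInt m' (fun ω => min (g₀ ω) 1) ≤ faInt m' g₀ := by
        refine faInt_mono_nonneg m' (fun ω => ?_) (fun ω => ?_)
          (fun ω => min_le_left _ _) (hLint g₀ hg₀L)
        · exact le_min ((hind0 _ ω).trans (hg₀ge ω))
            zero_le_one
        · exact (hind0 _ ω).trans (hg₀ge ω)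
      have h2' : faInt m' f₀ ≤ faInt m' (fun ω => max (f₀ ω) 0) :=
        faInt_le_posPart m' f₀ (hLint f₀ hf₀L)
      linarith
  choose f g hfL hgL hf0 hfle hgle hg1 hgap using hchoice
  -- the decreasing sequence of minima
  set H : ℕ → Ω → ℝ :=
    fun n => Nat.rec (motive := fun _ => Ω → ℝ) (f 0)
      (fun k Hk ω => min (Hk ω) (f (k + 1) ω)) n with hH
  have hHsucc : ∀ n, H (n + 1) = fun ω => min (H n ω) (f (n + 1) ω) := fun n => rfl
  have hHL : ∀ n, H n ∈ L := by
    intro n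
    induction n with
    | zero => exact hfL 0
    | succ k ih => exact hminL _ ih _ (hfL (k + 1))
  have hH0 : ∀ n ω, 0 ≤ H n ω := by
    intro n
    induction n with
    | zero => exact hf0 0
    | succ k ih => exact fun ω => le_min (ih ω) (hf0 (k + 1) ω)
  have hHle_f : ∀ n ω, H n ω ≤ f n ω := by
    intro n
    cases n with
    | zero => exact fun ω => le_refl _
    | succ k => exact fun ω => min_le_right _ _
  have hHdec : ∀ n ω, H (n + 1) ω ≤ H n ω := fun n ω => min_le_left _ _
  have hHanti : ∀ {N n : ℕ}, N ≤ n → ∀ ω, H n ω ≤ H N ω := by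
    intro N n hNn ω
    induction n with
    | zero => rw [Nat.le_zero.1 hNn]
    | succ k ih =>
      rcases Nat.lt_or_ge N (k + 1) with h | h
      · exact (hHdec k ω).trans (ih (Nat.lt_succ_iff.1 h))
      · rw [le_antisymm hNn h]
  have hHE : ∀ n ω, H n ω ≤ (E n).indicator (fun _ => (1:ℝ)) ω :=
    fun n ω => (hHle_f n ω).trans (hfle n ω)
  have hHtend : ∀ ω, Tendsto (fun n => H n ω) atTop (nhds 0) := by
    intro ω
    have : ω ∉ ⋂ n, E n := by rw [hEempty]; exact Set.notMem_empty ω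
    rw [Set.mem_iInter] at this
    push_neg at this
    obtain ⟨N, hN⟩ := this
    refine tendsto_atTop_of_eventually_const (i₀ := N) (fun n hn => ?_)
    refine le_antisymm ?_ (hH0 n ω)
    calc H n ω ≤ H N ω := hHanti hn ω
      _ ≤ (E N).indicator (fun _ => (1:ℝ)) ω := hHE N ω
      _ = 0 := Set.indicator_of_notMem hN _
  have hdan := hdaniell H hHL hHdec hHtend
  -- key induction
  have hkey : ∀ n, faInt m' (g n) ≤ faInt m' (H n) +
      ∑ i ∈ Finset.range (n + 1), η / 2 ^ (i + 1) := by
    intro n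
    induction n with
    | zero =>
      have h := hgap 0
      have hH0eq : faInt m' (H 0) = faInt m' (f 0) := rfl
      rw [hH0eq]
      norm_num [Finset.sum_range_one] at h ⊢
      linarith
    | succ k ih =>
      have hf0' : ∀ ω, 0 ≤ f (k + 1) ω := hf0 (k + 1)
      have hsup : faInt m' (H k) + faInt m' (f (k + 1)) ≤
          faInt m' (fun ω => H k ω + f (k + 1) ω) :=
        faInt_superadd m' (hH0 k) hf0' (hLint _ (hLadd _ (hHL k) _ (hfL (k + 1))))
      have hfun : (fun ω => H (k + 1) ω + max (H k ω) (f (k + 1) ω)) =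
          (fun ω => H k ω + f (k + 1) ω) := by
        funext ω
        rw [hHsucc k]
        exact min_add_max _ _
      have hsub : faInt m' (fun ω => H k ω + f (k + 1) ω) ≤
          faInt m' (H (k + 1)) + faInt m' (fun ω => max (H k ω) (f (k + 1) ω)) := by
        rw [← hfun]
        refine faInt_subadd m' m.total (hH0 (k + 1))
          (fun ω => ?_) (fun ω => le_max_of_le_left (hH0 k ω))
          (hLint _ (hHL (k + 1))) (hLint _ (hLsup _ (hHL k) _ (hfL (k + 1))))
        exact (hHE (k + 1) ω).trans (hind1 _ ω)
      have hmaxg : faInt m' (fun ω => max (H k ω) (f (k + 1) ω)) ≤ faInt m' (g k) := by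
        refine faInt_mono_nonneg m' (fun ω => le_max_of_le_left (hH0 k ω))
          (fun ω => (hind0 _ ω).trans (hgle k ω))
          (fun ω => max_le ?_ ?_) (hLint _ (hgL k))
        · exact (hHE k ω).trans (hgle k ω)
        · refine ((hfle (k + 1) ω).trans ?_).trans (hgle k ω)
          exact Set.indicator_le_indicator_of_subset (hEdec k)
            (fun _ => zero_le_one) ω
      have hgapk := hgap (k + 1)
      rw [Finset.sum_range_succ]
      linarith
  -- sum of the errors is at most η
  have hsum_le : ∀ n : ℕ, ∑ i ∈ Finset.range (n + 1), η / 2 ^ (i + 1) ≤ η := by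
    intro n
    have h2 : ∑ i ∈ Finset.range (n + 1), (1 / 2 : ℝ) ^ (i + 1) ≤ 1 := by
      have := sum_geometric_two_le (n + 1)
      have heq : ∑ i ∈ Finset.range (n + 1), (1 / 2 : ℝ) ^ (i + 1) =
          (1 / 2) * ∑ i ∈ Finset.range (n + 1), (1 / 2 : ℝ) ^ i := by
        rw [Finset.mul_sum]
        exact Finset.sum_congr rfl (fun i _ => by ring)
      rw [heq]
      linarith
    have heq2 : ∑ i ∈ Finset.range (n + 1), η / 2 ^ (i + 1) =
        η * ∑ i ∈ Finset.range (n + 1), (1 / 2 : ℝ) ^ (i + 1) := by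
      rw [Finset.mul_sum]
      exact Finset.sum_congr rfl (fun i _ => by rw [one_div, inv_pow]; ring)
    rw [heq2]
    nlinarith
  -- conclude
  rw [Metric.tendsto_atTop] at hdan
  obtain ⟨N, hN⟩ := hdan η hη0
  refine ⟨N, fun n hn => ?_⟩
  have h1' : m'.μ (E n) ≤ faInt m' (g n) :=
    measure_le_faInt m' (g n) (E n) (hgle n) (hLint _ (hgL n))
  have h2' := (hkey n).trans (add_le_add_right (hsum_le n) _)
  have h3' := hN n hn
  rw [Real.dist_eq, sub_zero] at h3'
  have h4' : faInt m' (H n) < η := lt_of_abs_lt h3'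
  rw [Real.dist_eq, sub_zero, abs_of_nonneg (m.nonneg (E n))]
  have : m.μ (E n) = m'.μ (E n) := rfl
  rw [this]
  have : ε = η + η := by rw [hη]; ring
  linarith
end
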